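/- arXiv:2504.11849 — 14 statements merged into one kernel-verified Lean document; each statement's English description precedes it below -/
import Mathlib

section
/- Let X be a real Banach space and x, u ∈ X with x ≠ 0. Then u ∈ x⁺ \ x⁻ if and only if f(u) > 0 for every norm-one functional f supporting x (i.e., every f ∈ X* with ||f|| = 1 and f(x) = ||x||). Similarly, u ∈ x⁻ \ x⁺ if and only if f(u) < 0 for every such supporting functional. -/
open scoped ENNReal

/-- Birkhoff-James orthogonality: `x ⊥_B y` iff `‖x + c • y‖ ≥ ‖x‖` for all scalars `c`. -/
def BJOrth (𝕜 : Type*) {X : Type*} [RCLike 𝕜] [NormedAddCommGroup X] [NormedSpace 𝕜 X]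
    (x y : X) : Prop := ∀ c : 𝕜, ‖x‖ ≤ ‖x + c • y‖

/-- `x` is a left symmetric point. -/
def LeftSymPt (𝕜 : Type*) {X : Type*} [RCLike 𝕜] [NormedAddCommGroup X] [NormedSpace 𝕜 X]
    (x : X) : Prop := ∀ y : X, BJOrth 𝕜 x y → BJOrth 𝕜 y x

/-- `x` is a right symmetric point. -/
def RightSymPt (𝕜 : Type*) {X : Type*} [RCLike 𝕜] [NormedAddCommGroup X] [NormedSpace 𝕜 X]
    (x : X) : Prop := ∀ y : X, BJOrth 𝕜 y x → BJOrth 𝕜 x y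

/-- `u ∈ x⁺` : `‖x + t • u‖ ≥ ‖x‖` for all `t ≥ 0`. -/
def InPlus {X : Type*} [NormedAddCommGroup X] [NormedSpace ℝ X] (x u : X) : Prop :=
  ∀ t : ℝ, 0 ≤ t → ‖x‖ ≤ ‖x + t • u‖

/-- `u ∈ x⁻` : `‖x + t • u‖ ≥ ‖x‖` for all `t ≤ 0`. -/
def InMinus {X : Type*} [NormedAddCommGroup X] [NormedSpace ℝ X] (x u : X) : Prop :=
  ∀ t : ℝ, t ≤ 0 → ‖x‖ ≤ ‖x + t • u‖

section aux
variable {X : Type*} [NormedAddCommGroup X] [NormedSpace ℝ X]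

/-- Difference quotient of the norm at `x` in direction `v`. -/
noncomputable def Qd (x v : X) (t : ℝ) : ℝ := (‖x + t • v‖ - ‖x‖) / t

lemma Qd_ge (x v : X) {t : ℝ} (ht : 0 < t) : -‖v‖ ≤ Qd x v t := by
  rw [Qd, le_div_iff₀ ht]
  have h1 : ‖x‖ ≤ ‖x + t • v‖ + ‖t • v‖ := by
    have := norm_add_le (x + t • v) (-(t • v))
    simpa using this
  have h2 : ‖t • v‖ = t * ‖v‖ := by rw [norm_smul, Real.norm_eq_abs, abs_of_pos ht]
  nlinarith

lemma Qd_mono (x v : X) {t s : ℝ} (ht : 0 < t) (hts : t ≤ s) : Qd x v t ≤ Qd x v s := by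
  have hs : 0 < s := lt_of_lt_of_le ht hts
  have hkey : ‖x + t • v‖ ≤ (1 - t / s) * ‖x‖ + (t / s) * ‖x + s • v‖ := by
    have hrw : x + t • v = (1 - t / s) • x + (t / s) • (x + s • v) := by
      rw [smul_add, smul_smul, div_mul_cancel₀ _ hs.ne']
      module
    rw [hrw]
    calc ‖(1 - t / s) • x + (t / s) • (x + s • v)‖
        ≤ ‖(1 - t / s) • x‖ + ‖(t / s) • (x + s • v)‖ := norm_add_le _ _
      _ = (1 - t / s) * ‖x‖ + (t / s) * ‖x + s • v‖ := by
          rw [norm_smul, norm_smul, Real.norm_eq_abs, Real.norm_eq_abs,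
            abs_of_nonneg (by
              have := div_le_one_of_le₀ hts hs.le; linarith), abs_of_nonneg (by positivity)]
  have hkey' : s * ‖x + t • v‖ ≤ (s - t) * ‖x‖ + t * ‖x + s • v‖ := by
    have hmul := mul_le_mul_of_nonneg_left hkey hs.le
    have heq : s * ((1 - t / s) * ‖x‖ + t / s * ‖x + s • v‖)
        = (s - t) * ‖x‖ + t * ‖x + s • v‖ := by
      field_simp
    linarith [hmul.trans_eq heq]
  rw [Qd, Qd, div_le_div_iff₀ ht hs]
  nlinarith

/-- The one-sided Gateaux-type sublinear functional. -/
noncomputable def pB (x v : X) : ℝ := sInf (Qd x v '' Set.Ioi 0)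

lemma pB_bdd (x v : X) : BddBelow (Qd x v '' Set.Ioi 0) :=
  ⟨-‖v‖, by rintro _ ⟨t, ht, rfl⟩; exact Qd_ge x v ht⟩

lemma pB_ne (x v : X) : (Qd x v '' Set.Ioi 0).Nonempty := ⟨Qd x v 1, 1, Set.mem_Ioi.mpr one_pos, rfl⟩

lemma pB_le (x v : X) {t : ℝ} (ht : 0 < t) : pB x v ≤ Qd x v t :=
  csInf_le (pB_bdd x v) ⟨t, ht, rfl⟩

lemma le_pB (x v : X) {c : ℝ} (h : ∀ t : ℝ, 0 < t → c ≤ Qd x v t) : c ≤ pB x v :=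
  le_csInf (pB_ne x v) (by rintro _ ⟨t, ht, rfl⟩; exact h t ht)

lemma Qd_self (x : X) {t : ℝ} (ht : 0 < t) : Qd x x t = ‖x‖ := by
  rw [Qd]
  have h : x + t • x = (1 + t) • x := by module
  rw [h, norm_smul, Real.norm_eq_abs, abs_of_pos (by linarith)]
  field_simp
  ring

lemma pB_self (x : X) : pB x x = ‖x‖ := by
  apply le_antisymm ((pB_le x x one_pos).trans_eq (Qd_self x one_pos))
  exact le_pB x x fun t ht => (Qd_self x ht).ge

lemma pB_neg_self (x : X) : pB x (-x) ≤ -‖x‖ := by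
  have := pB_le x (-x) one_pos
  simpa [Qd] using this

lemma pB_le_norm (x v : X) : pB x v ≤ ‖v‖ := by
  refine (pB_le x v one_pos).trans ?_
  rw [Qd]
  simp only [one_smul, div_one]
  have := norm_add_le x v
  linarith

lemma pB_add (x u v : X) : pB x (u + v) ≤ pB x u + pB x v := by
  have key : ∀ s s' : ℝ, 0 < s → 0 < s' → pB x (u + v) ≤ Qd x u s + Qd x v s' := by
    intro s s' hs hs'
    set t := min s s' / 2 with htdef
    have ht : 0 < t := by positivity
    have h1 : Qd x (u + v) t ≤ Qd x u (2 * t) + Qd x v (2 * t) := by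
      have hrw : x + t • (u + v) = (1/2 : ℝ) • (x + (2*t) • u) + (1/2 : ℝ) • (x + (2*t) • v) := by
        module
      rw [Qd, Qd, Qd, ← add_div, div_le_div_iff₀ ht (by linarith)]
      have hn : ‖x + t • (u + v)‖ ≤ (1/2) * ‖x + (2*t) • u‖ + (1/2) * ‖x + (2*t) • v‖ := by
        rw [hrw]
        calc _ ≤ ‖(1/2 : ℝ) • (x + (2*t) • u)‖ + ‖(1/2 : ℝ) • (x + (2*t) • v)‖ := norm_add_le _ _
          _ = _ := by rw [norm_smul, norm_smul]; simp
      nlinarith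
    have h2 : Qd x u (2 * t) ≤ Qd x u s :=
      Qd_mono x u (by linarith) (by rw [htdef]; linarith [min_le_left s s'])
    have h3 : Qd x v (2 * t) ≤ Qd x v s' :=
      Qd_mono x v (by linarith) (by rw [htdef]; linarith [min_le_right s s'])
    linarith [pB_le x (u + v) ht]
  have step1 : ∀ s' : ℝ, 0 < s' → pB x (u + v) - Qd x v s' ≤ pB x u := by
    intro s' hs'
    exact le_pB x u fun s hs => by linarith [key s s' hs hs']
  have step2 : pB x (u + v) - pB x u ≤ pB x v := by
    refine le_pB x v fun s' hs' => by linarith [step1 s' hs']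
  linarith

lemma pB_smul_le (x v : X) {c : ℝ} (hc : 0 < c) : c * pB x v ≤ pB x (c • v) := by
  refine le_pB x (c • v) fun t ht => ?_
  have h1 : Qd x (c • v) t = c * Qd x v (t * c) := by
    have ht' := ht.ne'
    have hc' := hc.ne'
    rw [Qd, Qd, smul_smul]
    field_simp
  rw [h1]
  exact mul_le_mul_of_nonneg_left (pB_le x v (by positivity)) hc.le

lemma pB_zero (x : X) : pB x (0 : X) = 0 := by
  have h1 : pB x 0 ≤ 0 := by simpa [Qd] using pB_le x (0 : X) one_pos
  have h2 : (0 : ℝ) ≤ pB x 0 := le_pB x 0 fun t ht => by simp [Qd]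
  linarith

/-- Key existence lemma: if `u ∈ x⁺` then there is a supporting functional nonnegative at `u`. -/
lemma exists_support_nonneg (x u : X) (hx : x ≠ 0) (h : InPlus x u) :
    ∃ f : X →L[ℝ] ℝ, ‖f‖ = 1 ∧ f x = ‖x‖ ∧ 0 ≤ f u := by
  by_cases hu : u = 0
  · obtain ⟨f, hf1, hf2⟩ := exists_dual_vector ℝ x (norm_ne_zero_iff.mpr hx)
    exact ⟨f, hf1, by simpa using hf2, by simp [hu]⟩
  -- partial linear map on span {u}
  set f0 : X →ₗ.[ℝ] ℝ := LinearPMap.mkSpanSingleton u (pB x u) hu with hf0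
  have hsub : ∀ z : f0.domain, f0 z ≤ pB x (z : X) := by
    rintro ⟨z, hz⟩
    rw [LinearPMap.domain_mkSpanSingleton] at hz
    obtain ⟨c, rfl⟩ := Submodule.mem_span_singleton.mp hz
    have happ : f0 ⟨c • u, hz⟩ = c * pB x u := by
      exact (LinearPMap.mkSpanSingleton'_apply (σ := RingHom.id ℝ) u (pB x u)
        (fun c h => by simp [(smul_eq_zero.mp h).resolve_right hu]) c hz).trans (smul_eq_mul _ _)
    rw [happ]
    rcases lt_trichotomy c 0 with hc | hc | hc
    · -- c < 0 : c * pB x u = -((-c) * pB x u) and use pB u + pB (-u) ≥ 0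
      have hsum : (0 : ℝ) ≤ pB x u + pB x (-u) := by
        have := pB_add x u (-u)
        simpa [pB_zero] using this
      have h1 : (-c) * pB x (-u) ≤ pB x ((-c) • (-u)) := pB_smul_le x (-u) (by linarith)
      have h2 : ((-c) • (-u) : X) = c • u := by module
      rw [h2] at h1
      nlinarith
    · simp [hc, pB_zero]
    · have := pB_smul_le x u hc
      simpa using this
  obtain ⟨g, hg1, hg2⟩ := exists_extension_of_le_sublinear f0
    (pB x) (fun c hc v => le_antisymm
      (by
        have h1 := pB_smul_le x (c • v) (show (0:ℝ) < c⁻¹ by positivity)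
        have h2 : (c⁻¹ • (c • v) : X) = v := by
          rw [smul_smul, inv_mul_cancel₀ (ne_of_gt hc), one_smul]
        rw [h2] at h1
        have := mul_le_mul_of_nonneg_left h1 hc.le
        rw [← mul_assoc, mul_inv_cancel₀ (ne_of_gt hc), one_mul] at this
        linarith)
      (pB_smul_le x v hc))
    (fun v w => pB_add x v w) hsub
  -- g is bounded: g v ≤ pB x v ≤ ‖v‖
  have hb : ∀ v : X, |g v| ≤ ‖v‖ := by
    intro v
    rw [abs_le]
    constructor
    · have := (hg2 (-v)).trans (pB_le_norm x (-v))
      simp only [map_neg, norm_neg] at this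
      linarith
    · exact (hg2 v).trans (pB_le_norm x v)
  set f : X →L[ℝ] ℝ := LinearMap.mkContinuous g 1 (fun v => by simpa using hb v) with hfdef
  have hfx : f x = ‖x‖ := by
    have h1 : f x ≤ ‖x‖ := by
      have := hg2 x
      rw [pB_self] at this
      exact this
    have h2 : ‖x‖ ≤ f x := by
      have := (hg2 (-x)).trans (pB_neg_self x)
      have hfneg : f (-x) = -(f x) := map_neg f x
      simp only [hfdef, LinearMap.mkContinuous_apply] at hfneg ⊢
      simp only [map_neg] at this
      linarith
    linarith
  have hfu : 0 ≤ f u := by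
    have humem : u ∈ f0.domain := by
      rw [hf0, LinearPMap.domain_mkSpanSingleton]
      exact Submodule.mem_span_singleton_self u
    have h1 : g u = pB x u := by
      have h := hg1 ⟨u, humem⟩
      exact h.trans (LinearPMap.mkSpanSingleton_apply ℝ ℝ hu (pB x u))
    have h2 : (0 : ℝ) ≤ pB x u := le_pB x u fun t ht => by
      rw [Qd, le_div_iff₀ ht]
      have := h t ht.le
      linarith
    show (0:ℝ) ≤ g u
    linarith
  have hnorm : ‖f‖ = 1 := by
    apply le_antisymm
    · exact LinearMap.mkContinuous_norm_le g zero_le_one (fun v => by simpa using hb v)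
    · have hxn : 0 < ‖x‖ := norm_pos_iff.mpr hx
      have := f.le_opNorm x
      rw [hfx] at this
      calc (1:ℝ) = ‖x‖ / ‖x‖ := by rw [div_self hxn.ne']
        _ ≤ ‖f‖ := by rw [div_le_iff₀ hxn]; simpa [Real.norm_eq_abs, abs_of_nonneg (norm_nonneg x)] using this
  exact ⟨f, hnorm, hfx, hfu⟩

lemma inMinus_iff_inPlus_neg (x u : X) : InMinus x u ↔ InPlus x (-u) := by
  constructor
  · intro h t ht
    have := h (-t) (by linarith)
    simpa [neg_smul, smul_neg] using this
  · intro h t ht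
    have := h (-t) (by linarith)
    simpa [neg_smul, smul_neg] using this

lemma inPlus_of_support (x u : X) (f : X →L[ℝ] ℝ) (hf1 : ‖f‖ = 1) (hf2 : f x = ‖x‖)
    (hfu : 0 ≤ f u) : InPlus x u := by
  intro t ht
  have h1 : f (x + t • u) ≤ ‖x + t • u‖ := by
    have := f.le_opNorm (x + t • u)
    rw [hf1, one_mul] at this
    exact (le_abs_self _).trans (by simpa [Real.norm_eq_abs] using this)
  have h2 : f (x + t • u) = ‖x‖ + t * f u := by
    rw [map_add, hf2, map_smul]; simp
  nlinarith

end aux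

/-- Characterization of u ∈ x⁺∖x⁻ and u ∈ x⁻∖x⁺ via supporting functionals. -/
theorem stmt1 {X : Type*} [NormedAddCommGroup X] [NormedSpace ℝ X] [CompleteSpace X]
    (x u : X) (hx : x ≠ 0) :
    ((InPlus x u ∧ ¬ InMinus x u) ↔
      ∀ f : X →L[ℝ] ℝ, ‖f‖ = 1 → f x = ‖x‖ → 0 < f u) ∧
    ((InMinus x u ∧ ¬ InPlus x u) ↔
      ∀ f : X →L[ℝ] ℝ, ‖f‖ = 1 → f x = ‖x‖ → f u < 0) := by
  constructor
  · constructor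
    · rintro ⟨hp, hm⟩ f hf1 hf2
      by_contra hle
      push_neg at hle
      apply hm
      rw [inMinus_iff_inPlus_neg]
      exact inPlus_of_support x (-u) f hf1 hf2 (by simpa using neg_nonneg.mpr hle)
    · intro hall
      obtain ⟨f, hf1, hf2⟩ := exists_dual_vector ℝ x (norm_ne_zero_iff.mpr hx)
      have hf2' : f x = ‖x‖ := by simpa using hf2
      have hpos := hall f hf1 hf2'
      refine ⟨inPlus_of_support x u f hf1 hf2' hpos.le, ?_⟩
      intro hm
      rw [inMinus_iff_inPlus_neg] at hm
      obtain ⟨g, hg1, hg2, hg3⟩ := exists_support_nonneg x (-u) hx hm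
      have := hall g hg1 hg2
      simp only [map_neg] at hg3
      linarith
  · constructor
    · rintro ⟨hm, hp⟩ f hf1 hf2
      by_contra hle
      push_neg at hle
      exact hp (inPlus_of_support x u f hf1 hf2 hle)
    · intro hall
      obtain ⟨f, hf1, hf2⟩ := exists_dual_vector ℝ x (norm_ne_zero_iff.mpr hx)
      have hf2' : f x = ‖x‖ := by simpa using hf2
      have hneg := hall f hf1 hf2'
      refine ⟨?_, ?_⟩
      · rw [inMinus_iff_inPlus_neg]
        exact inPlus_of_support x (-u) f hf1 hf2' (by simpa using neg_nonneg.mpr hneg.le)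
      · intro hp
        obtain ⟨g, hg1, hg2, hg3⟩ := exists_support_nonneg x u hx hp
        have := hall g hg1 hg2
        linarith
end

section
/- Let K be a non-empty set and X a Banach space. If f ∈ ℓ∞(K, X) satisfies: (i) there exists k₀ ∈ K with ||f(k₀)|| = 1 and f(k) = 0 for all k ≠ k₀, and (ii) f(k₀) is a left symmetric point of X, then f is a left symmetric point of ℓ∞(K, X). -/
open scoped ENNReal

/-- Sufficiency: such f is left symmetric in ℓ∞(K, X). -/
theorem stmt2 (𝕜 K X : Type*) [RCLike 𝕜] [Nonempty K]
    [NormedAddCommGroup X] [NormedSpace 𝕜 X] [CompleteSpace X]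
    (f : lp (fun _ : K => X) ∞) (k₀ : K) (h1 : ‖f k₀‖ = 1)
    (h0 : ∀ k : K, k ≠ k₀ → f k = 0) (h2 : LeftSymPt 𝕜 (f k₀)) :
    LeftSymPt 𝕜 f := by
  intro g hg
  -- Step 1: f k₀ ⊥_B g k₀
  have hfg : BJOrth 𝕜 (f k₀) (g k₀) := by
    intro c
    by_contra hlt
    push_neg at hlt
    rw [h1] at hlt
    set a := ‖f k₀ + c • g k₀‖ with ha
    have ha0 : 0 ≤ a := norm_nonneg _
    have hM : (0:ℝ) ≤ ‖c‖ * ‖g‖ := by positivity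
    set t : ℝ := min 1 ((1:ℝ)/(‖c‖*‖g‖+1)) with ht
    have ht0 : 0 < t := lt_min one_pos (by positivity)
    have ht1 : t ≤ 1 := min_le_left _ _
    have htM : t * (‖c‖ * ‖g‖) < 1 := by
      calc t * (‖c‖*‖g‖) ≤ ((1:ℝ)/(‖c‖*‖g‖+1)) * (‖c‖*‖g‖) :=
            mul_le_mul_of_nonneg_right (min_le_right _ _) hM
        _ < 1 := by
            rw [div_mul_eq_mul_div, one_mul, div_lt_one (by positivity)]; linarith
    set s : 𝕜 := (t : 𝕜) with hs
    have hsn : ‖s‖ = t := by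
      rw [hs, RCLike.norm_ofReal, abs_of_pos ht0]
    have h1sn : ‖1 - s‖ = 1 - t := by
      have : (1 : 𝕜) - s = ((1 - t : ℝ) : 𝕜) := by push_cast [hs]; ring
      rw [this, RCLike.norm_ofReal, abs_of_nonneg (by linarith)]
    have key : ‖f + (s*c) • g‖ < 1 := by
      have hmax : max ((1-t) + t*a) (t*(‖c‖*‖g‖)) < 1 := by
        apply max_lt _ htM
        nlinarith
      refine lt_of_le_of_lt (lp.norm_le_of_forall_le
        (le_trans (by positivity) (le_max_right ((1-t) + t*a) (t*(‖c‖*‖g‖)))) fun k => ?_) hmax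
      have hco : (f + (s*c) • g) k = f k + (s*c) • g k := by
        simp; rfl
      rw [hco]
      by_cases hk : k = k₀
      · subst hk
        have hid : f k + (s*c) • g k = (1-s) • (f k) + s • (f k + c • g k) := by
          rw [sub_smul, one_smul, smul_add, smul_smul]; abel
        rw [hid]
        refine le_trans (le_trans (norm_add_le _ _) ?_) (le_max_left _ _)
        rw [norm_smul, norm_smul, hsn, h1sn, h1, mul_one, ← ha]
      · rw [h0 k hk, zero_add, norm_smul, norm_mul, hsn]
        refine le_trans ?_ (le_max_right _ _)
        rw [mul_assoc]
        exact mul_le_mul_of_nonneg_left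
          (mul_le_mul_of_nonneg_left (lp.norm_apply_le_norm ENNReal.top_ne_zero g k)
            (norm_nonneg c)) ht0.le
    have h1f : (1:ℝ) ≤ ‖f‖ := h1 ▸ lp.norm_apply_le_norm ENNReal.top_ne_zero f k₀
    have := hg (s*c)
    linarith
  -- Step 2: g k₀ ⊥_B f k₀ by left symmetry
  have hgf : BJOrth 𝕜 (g k₀) (f k₀) := h2 _ hfg
  -- Step 3: conclude
  intro c
  refine lp.norm_le_of_forall_le (norm_nonneg _) fun k => ?_
  have hco : (g + c • f) k = g k + c • f k := by simp; rfl
  by_cases hk : k = k₀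
  · subst hk
    calc ‖g k‖ ≤ ‖g k + c • f k‖ := hgf c
      _ = ‖(g + c • f) k‖ := by rw [hco]
      _ ≤ ‖g + c • f‖ := lp.norm_apply_le_norm ENNReal.top_ne_zero _ k
  · have : ‖g k‖ = ‖(g + c • f) k‖ := by rw [hco, h0 k hk, smul_zero, add_zero]
    rw [this]
    exact lp.norm_apply_le_norm ENNReal.top_ne_zero _ k
end

section
/- Let K be a non-empty set and X a Banach space. If f ∈ ℓ∞(K, X) with ||f|| = 1 is a left symmetric point of ℓ∞(K, X), then there exists k₀ ∈ K such that ||f(k₀)|| = 1, f(k) = 0 for all k ≠ k₀, and f(k₀) is a left symmetric point of X. -/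
open scoped ENNReal

section Aux
variable {𝕜 K X : Type*} [RCLike 𝕜] [DecidableEq K]
  [NormedAddCommGroup X] [NormedSpace 𝕜 X]

lemma aux_norm_single (k : K) (x : X) :
    ‖(lp.single ∞ k x : lp (fun _ : K => X) ∞)‖ = ‖x‖ := by
  apply le_antisymm
  · apply lp.norm_le_of_forall_le (norm_nonneg x)
    intro j
    rcases eq_or_ne j k with rfl | hj
    · simp [lp.single_apply_self]
    · simp [lp.single_apply_ne _ _ _ hj, Pi.single_apply, hj]
  · have := lp.norm_apply_le_norm (ENNReal.top_ne_zero)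
      (lp.single ∞ k x : lp (fun _ : K => X) ∞) k
    simpa [lp.single_apply_self] using this

/-- Key lemma: if `f k ≠ 0` then the sup of the norms away from `k` is bounded away
from `1`. -/
lemma aux_key [Nonempty K] (f : lp (fun _ : K => X) ∞) (hf : ‖f‖ = 1)
    (hsym : LeftSymPt 𝕜 f) (k : K) (hk : f k ≠ 0) :
    ∃ ε : ℝ, 0 < ε ∧ ∀ k' : K, k' ≠ k → ‖f k'‖ ≤ 1 - ε := by
  by_contra h
  push_neg at h
  set g : lp (fun _ : K => X) ∞ := lp.single ∞ k (f k) with hg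
  have hfk : 0 < ‖f k‖ := norm_pos_iff.mpr hk
  have hfk1 : ‖f k‖ ≤ 1 := hf ▸ lp.norm_apply_le_norm ENNReal.top_ne_zero f k
  have horth : BJOrth 𝕜 f g := by
    intro c
    rw [hf]
    refine le_of_forall_sub_le fun ε hε => ?_
    obtain ⟨k', hk', hlt⟩ := h ε hε
    have h1 : ‖(f + c • g) k'‖ ≤ ‖f + c • g‖ :=
      lp.norm_apply_le_norm ENNReal.top_ne_zero _ k'
    have h2 : (f + c • g) k' = f k' := by
      have : g k' = 0 := by rw [hg]; exact lp.single_apply_ne (E := fun _ : K => X) ∞ k (f k) hk'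
      show f k' + c • g k' = f k'; simp [this]
    rw [h2] at h1
    linarith
  have horth' := hsym g horth
  set ε₀ : ℝ := ‖f k‖ / 2 with hε₀
  have hε₀pos : 0 < ε₀ := by positivity
  have hε₀le : ε₀ ≤ 1 / 2 := by rw [hε₀]; linarith
  have hle := horth' (-(ε₀ : 𝕜))
  have hnormg : ‖g‖ = ‖f k‖ := aux_norm_single k (f k)
  have hb : ‖g + (-(ε₀ : 𝕜)) • f‖ ≤ max ((1 - ε₀) * ‖f k‖) ε₀ := by
    apply lp.norm_le_of_forall_le (le_max_of_le_right hε₀pos.le)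
    intro j
    rcases eq_or_ne j k with rfl | hj
    · have h2 : (g + (-(ε₀ : 𝕜)) • f) j = ((1 - ε₀ : ℝ) : 𝕜) • f j := by
        have : g j = f j := by rw [hg]; exact lp.single_apply_self (E := fun _ : K => X) ∞ j (f j)
        simp only [lp.coeFn_add, Pi.add_apply, lp.coeFn_smul, Pi.smul_apply, this]
        push_cast
        module
      rw [h2, norm_smul, RCLike.norm_ofReal, abs_of_nonneg (by linarith)]
      exact le_max_left _ _
    · have h2 : (g + (-(ε₀ : 𝕜)) • f) j = (-(ε₀ : 𝕜)) • f j := by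
        have : g j = 0 := by rw [hg]; exact lp.single_apply_ne (E := fun _ : K => X) ∞ k (f k) hj
        show g j + (-(ε₀ : 𝕜)) • f j = _; simp [this]
      rw [h2, norm_smul, norm_neg, RCLike.norm_ofReal, abs_of_nonneg hε₀pos.le]
      refine le_trans ?_ (le_max_right _ _)
      have : ‖f j‖ ≤ 1 := hf ▸ lp.norm_apply_le_norm ENNReal.top_ne_zero f j
      nlinarith
  have hlt : max ((1 - ε₀) * ‖f k‖) ε₀ < ‖f k‖ := by
    apply max_lt
    · nlinarith
    · rw [hε₀]; linarith
  rw [hnormg] at hle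
  linarith [lt_of_le_of_lt (le_trans hle hb) hlt]

end Aux

/-- Necessity: a norm-one left symmetric point of ℓ∞(K, X) is supported at one point. -/
theorem stmt3 (𝕜 K X : Type*) [RCLike 𝕜] [Nonempty K]
    [NormedAddCommGroup X] [NormedSpace 𝕜 X] [CompleteSpace X]
    (f : lp (fun _ : K => X) ∞) (hf : ‖f‖ = 1) (hsym : LeftSymPt 𝕜 f) :
    ∃ k₀ : K, ‖f k₀‖ = 1 ∧ (∀ k : K, k ≠ k₀ → f k = 0) ∧ LeftSymPt 𝕜 (f k₀) := by
  classical
  -- find a coordinate with big norm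
  have hbdd : BddAbove (Set.range fun k : K => ‖f k‖) := memℓp_infty_iff.1 (lp.memℓp f)
  have hsup : (⨆ k : K, ‖f k‖) = 1 := by rw [← lp.norm_eq_ciSup, hf]
  obtain ⟨k₀, hk₀⟩ : ∃ k : K, (1 : ℝ) / 2 < ‖f k‖ := by
    by_contra h
    push_neg at h
    have : (⨆ k : K, ‖f k‖) ≤ 1 / 2 := ciSup_le h
    rw [hsup] at this; linarith
  have hk₀ne : f k₀ ≠ 0 := by
    intro h0; rw [h0, norm_zero] at hk₀; linarith
  obtain ⟨ε, hεpos, hε⟩ := aux_key f hf hsym k₀ hk₀ne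
  -- all other coordinates vanish
  have hzero : ∀ k : K, k ≠ k₀ → f k = 0 := by
    intro k hk
    by_contra hne
    obtain ⟨ε', hε'pos, hε'⟩ := aux_key f hf hsym k hne
    have hall : ∀ j : K, ‖f j‖ ≤ 1 - min ε ε' := by
      intro j
      rcases eq_or_ne j k₀ with rfl | hj
      · have := hε' j (Ne.symm hk)
        have hm : min ε ε' ≤ ε' := min_le_right _ _
        linarith
      · have := hε j hj
        have hm : min ε ε' ≤ ε := min_le_left _ _
        linarith
    have : (⨆ k : K, ‖f k‖) ≤ 1 - min ε ε' := ciSup_le hall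
    rw [hsup] at this
    have : 0 < min ε ε' := lt_min hεpos hε'pos
    linarith
  -- norm at k₀ is 1
  have hnorm1 : ‖f k₀‖ = 1 := by
    apply le_antisymm (hf ▸ lp.norm_apply_le_norm ENNReal.top_ne_zero f k₀)
    rw [← hf]
    apply lp.norm_le_of_forall_le (norm_nonneg _)
    intro j
    rcases eq_or_ne j k₀ with rfl | hj
    · exact le_rfl
    · rw [hzero j hj, norm_zero]; exact norm_nonneg _
  refine ⟨k₀, hnorm1, hzero, ?_⟩
  -- left symmetry of f k₀
  intro y hy c
  set g : lp (fun _ : K => X) ∞ := lp.single ∞ k₀ y with hg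
  have horth : BJOrth 𝕜 f g := by
    intro c'
    have h2 : (f + c' • g) k₀ = f k₀ + c' • y := by
      have : g k₀ = y := by rw [hg]; exact lp.single_apply_self (E := fun _ : K => X) ∞ k₀ y
      show f k₀ + c' • g k₀ = _; simp [this]
    calc ‖f‖ = ‖f k₀‖ := by rw [hf, hnorm1]
    _ ≤ ‖f k₀ + c' • y‖ := hy c'
    _ = ‖(f + c' • g) k₀‖ := by rw [h2]
    _ ≤ ‖f + c' • g‖ := lp.norm_apply_le_norm ENNReal.top_ne_zero _ k₀
  have horth' := hsym g horth c
  have hnormg : ‖g‖ = ‖y‖ := aux_norm_single k₀ y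
  have hb : ‖g + c • f‖ ≤ ‖y + c • f k₀‖ := by
    apply lp.norm_le_of_forall_le (norm_nonneg _)
    intro j
    rcases eq_or_ne j k₀ with rfl | hj
    · have h2 : (g + c • f) j = y + c • f j := by
        have : g j = y := by rw [hg]; exact lp.single_apply_self (E := fun _ : K => X) ∞ j y
        show g j + c • f j = _; simp [this]
      rw [h2]
    · have h2 : (g + c • f) j = 0 := by
        have h3 : g j = 0 := by rw [hg]; exact lp.single_apply_ne (E := fun _ : K => X) ∞ k₀ y hj
        have h4 : f j = 0 := hzero j hj
        show g j + c • f j = 0; simp [h3, h4]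
      rw [h2, norm_zero]
      exact norm_nonneg _
  rw [hnormg] at horth'
  exact le_trans horth' hb
end

section
/- Let K be a Hausdorff topological space and X a Banach space. There exists a non-zero continuous function in ℓ∞(K, X) that is a left symmetric point of ℓ∞(K, X) if and only if K contains an isolated point and X contains a non-zero left symmetric point. -/
open scoped ENNReal

lemma bjorth_of_small {𝕜 X : Type*} [RCLike 𝕜] [NormedAddCommGroup X] [NormedSpace 𝕜 X]
    {x y : X} {ε : ℝ} (hε : 0 < ε)
    (h : ∀ c : 𝕜, ‖c‖ ≤ ε → ‖x‖ ≤ ‖x + c • y‖) : BJOrth 𝕜 x y := by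
  intro c
  by_cases hc : ‖c‖ ≤ ε
  · exact h c hc
  push_neg at hc
  have hc0 : 0 < ‖c‖ := hε.trans hc
  set t : ℝ := ε / ‖c‖ with ht
  have ht0 : 0 < t := div_pos hε hc0
  have ht1 : t < 1 := (div_lt_one hc0).2 hc
  have key : ‖x‖ ≤ ‖x + (((t : ℝ) : 𝕜) * c) • y‖ := by
    apply h
    rw [norm_mul, RCLike.norm_ofReal, abs_of_pos ht0, ht, div_mul_cancel₀ _ hc0.ne']
  have hdecomp : x + (((t : ℝ) : 𝕜) * c) • y
      = ((1 : 𝕜) - ((t : ℝ) : 𝕜)) • x + ((t : ℝ) : 𝕜) • (x + c • y) := by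
    rw [smul_add, sub_smul, one_smul, smul_smul]; abel
  rw [hdecomp] at key
  have h2 : ‖x‖ ≤ (1 - t) * ‖x‖ + t * ‖x + c • y‖ := by
    refine key.trans ((norm_add_le _ _).trans ?_)
    rw [norm_smul, norm_smul, RCLike.norm_ofReal, abs_of_pos ht0,
      show (1:𝕜) - ((t : ℝ) : 𝕜) = ((1 - t : ℝ) : 𝕜) by push_cast; ring,
      RCLike.norm_ofReal, abs_of_pos (by linarith)]
  nlinarith [norm_nonneg x, norm_nonneg (x + c • y)]

lemma norm_single_top {K X : Type*} [NormedAddCommGroup X] [DecidableEq K] (k : K) (x : X) :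
    ‖(lp.single ∞ k x : lp (fun _ : K => X) ∞)‖ = ‖x‖ := by
  refine le_antisymm (lp.norm_le_of_forall_le (norm_nonneg x) fun j => ?_) ?_
  · by_cases hj : j = k
    · subst hj; rw [lp.single_apply_self]
    · rw [lp.single_apply_ne _ _ _ hj, norm_zero]; exact norm_nonneg x
  · have := lp.norm_apply_le_norm ENNReal.top_ne_zero
      (lp.single ∞ k x : lp (fun _ : K => X) ∞) k
    rwa [lp.single_apply_self] at this

lemma single_add_smul_single {𝕜 K X : Type*} [RCLike 𝕜] [NormedAddCommGroup X]
    [NormedSpace 𝕜 X] [DecidableEq K] (k₀ : K) (a b : X) (c : 𝕜) :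
    (lp.single ∞ k₀ a : lp (fun _ : K => X) ∞) + c • lp.single ∞ k₀ b
      = lp.single ∞ k₀ (a + c • b) := by
  apply lp.ext; funext k
  simp only [lp.coeFn_add, Pi.add_apply, lp.coeFn_smul, Pi.smul_apply]
  by_cases hk : k = k₀
  · subst hk
    rw [lp.single_apply_self, lp.single_apply_self, lp.single_apply_self]
  · rw [lp.single_apply_ne _ _ _ hk, lp.single_apply_ne _ _ _ hk,
      lp.single_apply_ne _ _ _ hk, smul_zero, add_zero]

set_option maxHeartbeats 1000000 in
/-- Existence of a non-zero continuous left symmetric function in ℓ∞(K, X) iff K has an isolated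
point and X has a non-zero left symmetric point. -/
theorem stmt4 (𝕜 K X : Type*) [RCLike 𝕜] [TopologicalSpace K] [T2Space K]
    [NormedAddCommGroup X] [NormedSpace 𝕜 X] [CompleteSpace X] :
    (∃ f : lp (fun _ : K => X) ∞, f ≠ 0 ∧ Continuous (fun k : K => f k) ∧ LeftSymPt 𝕜 f) ↔
      ((∃ k : K, IsOpen ({k} : Set K)) ∧ ∃ x : X, x ≠ 0 ∧ LeftSymPt 𝕜 x) := by
  classical
  constructor
  · rintro ⟨f, hf0, hfc, hfs⟩
    -- Key: for any point in the support, all other values are small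
    have key : ∀ k₁ : K, f k₁ ≠ 0 → ∃ B, B < ‖f‖ ∧ ∀ k, k ≠ k₁ → ‖f k‖ ≤ B := by
      intro k₁ hk₁
      have hx₁ : 0 < ‖f k₁‖ := norm_pos_iff.2 hk₁
      have hfn : (0:ℝ) ≤ ‖f‖ := norm_nonneg f
      have hnot : ¬ BJOrth 𝕜 f (lp.single ∞ k₁ (f k₁)) := by
        intro horth
        have hgf := hfs _ horth
        set t : ℝ := min (1/2) (‖f k₁‖ / (2 * (‖f‖ + 1))) with htdef
        have ht0 : 0 < t := lt_min (by norm_num) (by positivity)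
        have ht1 : t < 1 := lt_of_le_of_lt (min_le_left _ _) (by norm_num)
        have htf : t * ‖f‖ < ‖f k₁‖ := by
          have h1 : t ≤ ‖f k₁‖ / (2 * (‖f‖ + 1)) := min_le_right _ _
          have h2 : ‖f k₁‖ / (2 * (‖f‖ + 1)) * ‖f‖ < ‖f k₁‖ := by
            rw [div_mul_eq_mul_div, div_lt_iff₀ (by positivity)]
            nlinarith
          calc t * ‖f‖ ≤ ‖f k₁‖ / (2 * (‖f‖ + 1)) * ‖f‖ := by gcongr
            _ < ‖f k₁‖ := h2
        set c : 𝕜 := ((-t : ℝ) : 𝕜) with hcdef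
        have hub : ‖(lp.single ∞ k₁ (f k₁) : lp (fun _ : K => X) ∞) + c • f‖
            ≤ max ((1 - t) * ‖f k₁‖) (t * ‖f‖) := by
          apply lp.norm_le_of_forall_le
            (le_max_of_le_right (by positivity))
          intro k
          simp only [lp.coeFn_add, Pi.add_apply, lp.coeFn_smul, Pi.smul_apply]
          by_cases hk : k = k₁
          · subst hk
            rw [lp.single_apply_self]
            refine le_max_of_le_left (le_of_eq ?_)
            have : f k + c • f k = ((1 : 𝕜) + c) • f k := by
              rw [add_smul, one_smul]
            rw [this, norm_smul, hcdef,
              show (1:𝕜) + ((-t : ℝ) : 𝕜) = ((1 - t : ℝ) : 𝕜) by push_cast; ring,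
              RCLike.norm_ofReal, abs_of_pos (by linarith)]
          · rw [lp.single_apply_ne _ _ _ hk, zero_add, norm_smul, hcdef,
              RCLike.norm_ofReal, abs_neg, abs_of_pos ht0]
            exact le_max_of_le_right
              (mul_le_mul_of_nonneg_left
                (lp.norm_apply_le_norm ENNReal.top_ne_zero f k) ht0.le)
        have hlt : ‖(lp.single ∞ k₁ (f k₁) : lp (fun _ : K => X) ∞) + c • f‖ < ‖f k₁‖ :=
          lt_of_le_of_lt hub (max_lt (by nlinarith) htf)
        have hge := hgf c
        rw [norm_single_top] at hge
        linarith
      obtain ⟨c, hc⟩ := not_forall.1 hnot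
      rw [not_le] at hc
      refine ⟨_, hc, fun k hk => ?_⟩
      have h1 := lp.norm_apply_le_norm ENNReal.top_ne_zero
        (f + c • lp.single ∞ k₁ (f k₁)) k
      rwa [lp.coeFn_add, Pi.add_apply, lp.coeFn_smul, Pi.smul_apply,
        lp.single_apply_ne _ _ _ hk, smul_zero, add_zero] at h1
    obtain ⟨k₀, hk₀⟩ : ∃ k, f k ≠ 0 := by
      by_contra h
      push_neg at h
      exact hf0 (lp.eq_zero_iff_coeFn_eq_zero.2 (funext h))
    have hzero : ∀ k, k ≠ k₀ → f k = 0 := by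
      intro k₁ hk₁
      by_contra hne
      obtain ⟨B₀, hB₀, h₀⟩ := key k₀ hk₀
      obtain ⟨B₁, hB₁, h₁⟩ := key k₁ hne
      have hall : ∀ k, ‖f k‖ ≤ max B₀ B₁ := by
        intro k
        by_cases hk : k = k₀
        · subst hk; exact le_max_of_le_right (h₁ _ (Ne.symm hk₁))
        · exact le_max_of_le_left (h₀ _ hk)
      have hBn : 0 ≤ max B₀ B₁ := le_trans (norm_nonneg (f k₀)) (hall k₀)
      have hle := lp.norm_le_of_forall_le hBn hall
      have hltm := max_lt hB₀ hB₁
      linarith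
    have hx₀ : 0 < ‖f k₀‖ := norm_pos_iff.2 hk₀
    have hfeq : f = lp.single ∞ k₀ (f k₀) := by
      apply lp.ext; funext k
      by_cases hk : k = k₀
      · subst hk; rw [lp.single_apply_self]
      · rw [lp.single_apply_ne _ _ _ hk, hzero k hk]
    refine ⟨⟨k₀, ?_⟩, f k₀, hk₀, ?_⟩
    · have hset : ({k₀} : Set K) = (fun k => ‖f k‖) ⁻¹' Set.Ioi (‖f k₀‖ / 2) := by
        ext k
        simp only [Set.mem_singleton_iff, Set.mem_preimage, Set.mem_Ioi]
        constructor
        · rintro rfl; linarith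
        · intro h
          by_contra hne
          rw [hzero k hne, norm_zero] at h
          linarith
      rw [hset]
      exact IsOpen.preimage hfc.norm isOpen_Ioi
    · intro y hxy
      have horth : BJOrth 𝕜 f (lp.single ∞ k₀ y) := by
        intro c'
        rw [hfeq, single_add_smul_single, norm_single_top, norm_single_top]
        exact hxy c'
      have hgf := hfs _ horth
      intro c
      have h2 := hgf c
      rw [hfeq, single_add_smul_single, norm_single_top, norm_single_top] at h2
      exact h2
  · rintro ⟨⟨k₀, hopen⟩, x, hx0, hxs⟩
    refine ⟨lp.single ∞ k₀ x, ?_, ?_, ?_⟩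
    · intro h
      apply hx0
      have h1 := lp.single_apply_self (E := fun _ : K => X) ∞ k₀ x
      rw [h] at h1
      simpa using h1.symm
    · rw [continuous_iff_continuousAt]
      intro k
      by_cases hk : k = k₀
      · subst hk
        refine ContinuousAt.congr (continuousAt_const (y := x)) ?_
        filter_upwards [hopen.mem_nhds rfl] with j hj
        rw [Set.mem_singleton_iff] at hj
        subst hj
        rw [lp.single_apply_self]
      · refine ContinuousAt.congr (continuousAt_const (y := (0 : X))) ?_
        filter_upwards [isClosed_singleton.isOpen_compl.mem_nhds
          (by simpa using hk : k ∈ ({k₀}ᶜ : Set K))] with j hj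
        rw [Set.mem_compl_iff, Set.mem_singleton_iff] at hj
        rw [lp.single_apply_ne _ _ _ hj]
    · intro g hfg
      have hx : 0 < ‖x‖ := norm_pos_iff.2 hx0
      have hg0 : BJOrth 𝕜 x (g k₀) := by
        apply bjorth_of_small (ε := ‖x‖ / (2 * (‖g‖ + 1))) (by positivity)
        intro c hc
        have h1 := hfg c
        rw [norm_single_top] at h1
        have h2 : ‖(lp.single ∞ k₀ x : lp (fun _ : K => X) ∞) + c • g‖
            ≤ max ‖x + c • g k₀‖ (‖c‖ * ‖g‖) := by
          apply lp.norm_le_of_forall_le (le_max_of_le_left (norm_nonneg _))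
          intro k
          simp only [lp.coeFn_add, Pi.add_apply, lp.coeFn_smul, Pi.smul_apply]
          by_cases hk : k = k₀
          · subst hk
            rw [lp.single_apply_self]
            exact le_max_left _ _
          · rw [lp.single_apply_ne _ _ _ hk, zero_add, norm_smul]
            exact le_max_of_le_right
              (mul_le_mul_of_nonneg_left
                (lp.norm_apply_le_norm ENNReal.top_ne_zero g k) (norm_nonneg c))
        have hsmall : ‖c‖ * ‖g‖ < ‖x‖ := by
          have hgn : (0:ℝ) ≤ ‖g‖ := norm_nonneg g
          have h3 : ‖x‖ / (2 * (‖g‖ + 1)) * ‖g‖ < ‖x‖ := by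
            rw [div_mul_eq_mul_div, div_lt_iff₀ (by positivity)]
            nlinarith
          calc ‖c‖ * ‖g‖ ≤ ‖x‖ / (2 * (‖g‖ + 1)) * ‖g‖ := by gcongr
            _ < ‖x‖ := h3
        rcases le_max_iff.1 (h1.trans h2) with h | h
        · exact h
        · linarith
      have hsym := hxs _ hg0
      intro c
      refine lp.norm_le_of_forall_le (norm_nonneg _) fun k => ?_
      refine le_trans ?_ (lp.norm_apply_le_norm ENNReal.top_ne_zero _ k)
      simp only [lp.coeFn_add, Pi.add_apply, lp.coeFn_smul, Pi.smul_apply]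
      by_cases hk : k = k₀
      · subst hk
        rw [lp.single_apply_self]
        exact hsym c
      · rw [lp.single_apply_ne _ _ _ hk, smul_zero, add_zero]
end

section
/- Let K be a non-empty set and X a Banach space. If f ∈ ℓ∞(K, X) with ||f|| = 1 is a right symmetric point of ℓ∞(K, X), then ||f(k)|| = 1 for every k ∈ K and f(k) is a right symmetric point of X for every k ∈ K. -/
open scoped ENNReal

section Aux

variable {𝕜 K X : Type*} [RCLike 𝕜] [Nonempty K]
    [NormedAddCommGroup X] [NormedSpace 𝕜 X] [CompleteSpace X]

lemma aux_norm_one (f : lp (fun _ : K => X) ∞) (hf : ‖f‖ = 1) (hsym : RightSymPt 𝕜 f)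
    (k₀ : K) : ‖f k₀‖ = 1 := by
  classical
  have hle : ∀ k, ‖f k‖ ≤ 1 := fun k => hf ▸ lp.norm_apply_le_norm (by norm_num) f k
  by_contra hr
  have hr1 : ‖f k₀‖ < 1 := lt_of_le_of_ne (hle k₀) hr
  have hr0 : 0 ≤ ‖f k₀‖ := norm_nonneg _
  -- find a unit vector u with the key property
  obtain ⟨u, hu1, hu2⟩ : ∃ u : X, ‖u‖ = 1 ∧
      ∀ c : 𝕜, RCLike.re c ≤ 0 → (1:ℝ) ≤ ‖u + c • f k₀‖ := by
    rcases eq_or_lt_of_le hr0 with h0 | h0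
    · -- f k₀ = 0; pick any unit vector
      have hk0 : f k₀ = 0 := norm_eq_zero.mp h0.symm
      have hex : ∃ k, f k ≠ 0 := by
        by_contra hall
        push_neg at hall
        have hfz : f = 0 := by ext k; simpa using hall k
        rw [hfz] at hf; simp at hf
      obtain ⟨k₁, hk₁⟩ := hex
      have hk₁n : ‖f k₁‖ ≠ 0 := norm_ne_zero_iff.mpr hk₁
      refine ⟨((‖f k₁‖⁻¹ : ℝ) : 𝕜) • f k₁, ?_, ?_⟩
      · rw [norm_smul]
        norm_num [RCLike.norm_ofReal]
        exact inv_mul_cancel₀ hk₁n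
      · intro c _
        rw [hk0, smul_zero, add_zero, norm_smul]
        norm_num [RCLike.norm_ofReal]
        rw [inv_mul_cancel₀ hk₁n]
    · -- ‖f k₀‖ > 0 : take u = -(1/‖f k₀‖) • f k₀
      refine ⟨(-(‖f k₀‖⁻¹ : ℝ) : 𝕜) • f k₀, ?_, ?_⟩
      · rw [norm_smul]
        norm_num [RCLike.norm_ofReal]
        exact inv_mul_cancel₀ (ne_of_gt h0)
      · intro c hc
        have heq : (-(‖f k₀‖⁻¹ : ℝ) : 𝕜) • f k₀ + c • f k₀
            = (c - ((‖f k₀‖⁻¹ : ℝ) : 𝕜)) • f k₀ := by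
          rw [← add_smul]; push_cast; ring_nf
        rw [heq, norm_smul]
        have h1 : ‖f k₀‖⁻¹ ≤ ‖c - ((‖f k₀‖⁻¹ : ℝ) : 𝕜)‖ := by
          have h2 := RCLike.re_le_norm (((‖f k₀‖⁻¹ : ℝ) : 𝕜) - c)
          rw [map_sub, RCLike.ofReal_re, norm_sub_rev] at h2
          linarith
        calc (1:ℝ) = ‖f k₀‖⁻¹ * ‖f k₀‖ := by field_simp
          _ ≤ ‖c - ((‖f k₀‖⁻¹ : ℝ) : 𝕜)‖ * ‖f k₀‖ :=
              mul_le_mul_of_nonneg_right h1 hr0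
  -- build g : equal to f away from k₀, equal to u at k₀
  have hgmem : Memℓp (fun k => if k = k₀ then u else f k : ∀ _ : K, X) ∞ := by
    apply memℓp_infty
    refine ⟨1, ?_⟩
    rintro x ⟨k, rfl⟩
    by_cases h : k = k₀ <;> simp [h, hu1, hle k]
  set g : lp (fun _ : K => X) ∞ := ⟨_, hgmem⟩ with hg
  have hgk : ∀ k, g k = if k = k₀ then u else f k := fun _ => rfl
  have hgle : ∀ k, ‖g k‖ ≤ 1 := by
    intro k; rw [hgk]; by_cases h : k = k₀ <;> simp [h, hu1, hle k]
  have hgnorm : ‖g‖ = 1 := by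
    refine le_antisymm (lp.norm_le_of_forall_le zero_le_one hgle) ?_
    have h3 := lp.norm_apply_le_norm (p := (∞ : ℝ≥0∞)) (by norm_num) g k₀
    rw [hgk k₀, if_pos rfl, hu1] at h3
    exact h3
  -- g ⊥_B f
  have hBJ : BJOrth 𝕜 g f := by
    intro c
    rw [hgnorm]
    rcases le_or_gt (RCLike.re c) 0 with hc | hc
    · calc (1:ℝ) ≤ ‖u + c • f k₀‖ := hu2 c hc
        _ = ‖(g + c • f) k₀‖ := by rw [show (g + c • f) k₀ = g k₀ + c • f k₀ from rfl]; simp [hgk k₀]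
        _ ≤ ‖g + c • f‖ := lp.norm_apply_le_norm (by norm_num) _ k₀
    · -- re c > 0 : use the other coordinates
      have hmax : ∀ k, ‖f k‖ ≤ max ‖f k₀‖ ‖g + c • f‖ := by
        intro k
        by_cases h : k = k₀
        · rw [h]; exact le_max_left _ _
        · refine le_max_of_le_right ?_
          have h1c : (1:ℝ) ≤ ‖(1 : 𝕜) + c‖ := by
            have h4 := RCLike.re_le_norm ((1:𝕜) + c)
            simp only [map_add, RCLike.one_re] at h4
            linarith
          calc ‖f k‖ ≤ ‖(1:𝕜) + c‖ * ‖f k‖ :=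
                le_mul_of_one_le_left (norm_nonneg _) h1c
            _ = ‖f k + c • f k‖ := by rw [← norm_smul, add_smul, one_smul]
            _ = ‖(g + c • f) k‖ := by rw [show (g + c • f) k = g k + c • f k from rfl]; simp [hgk k, h]
            _ ≤ ‖g + c • f‖ := lp.norm_apply_le_norm (by norm_num) _ k
      have hnn : (0:ℝ) ≤ max ‖f k₀‖ ‖g + c • f‖ := le_max_of_le_right (norm_nonneg _)
      have h5 := lp.norm_le_of_forall_le hnn hmax
      rw [hf] at h5
      rcases max_cases ‖f k₀‖ ‖g + c • f‖ with ⟨he, _⟩ | ⟨he, _⟩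
      · rw [he] at h5; linarith
      · rwa [he] at h5
  -- derive a contradiction from f ⊥_B g
  have hfg := hsym g hBJ
  set ε : ℝ := (1 - ‖f k₀‖) / 2 with hε
  have hε0 : 0 < ε := by rw [hε]; linarith
  have hε1 : ε ≤ 1 := by rw [hε]; linarith
  have hkey := hfg (-(ε : 𝕜))
  rw [hf] at hkey
  have hub : ‖f + (-(ε:𝕜)) • g‖ ≤ (1 + ‖f k₀‖) / 2 := by
    refine lp.norm_le_of_forall_le (by linarith) ?_
    intro k
    by_cases h : k = k₀
    · have heq : (f + (-(ε:𝕜)) • g) k = f k₀ + (-(ε:𝕜)) • u := by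
        rw [show (f + (-(ε:𝕜)) • g) k = f k + (-(ε:𝕜)) • g k from rfl]; simp [hgk k, h]
      rw [heq]
      calc ‖f k₀ + (-(ε:𝕜)) • u‖ ≤ ‖f k₀‖ + ‖(-(ε:𝕜)) • u‖ := norm_add_le _ _
        _ = ‖f k₀‖ + ε := by
            rw [norm_smul, hu1, mul_one, norm_neg, RCLike.norm_ofReal,
              abs_of_nonneg hε0.le]
        _ = (1 + ‖f k₀‖) / 2 := by rw [hε]; ring
    · have heq : (f + (-(ε:𝕜)) • g) k = ((1:𝕜) + (-(ε:𝕜))) • f k := by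
        rw [show (f + (-(ε:𝕜)) • g) k = f k + (-(ε:𝕜)) • g k from rfl]; simp [hgk k, h, add_smul]
      rw [heq, norm_smul]
      have hn : ‖(1:𝕜) + (-(ε:𝕜))‖ = 1 - ε := by
        have h6 : (1:𝕜) + (-(ε:𝕜)) = ((1 - ε : ℝ) : 𝕜) := by push_cast; ring
        rw [h6, RCLike.norm_ofReal, abs_of_nonneg (by linarith)]
      rw [hn]
      calc (1 - ε) * ‖f k‖ ≤ (1 - ε) * 1 :=
            mul_le_mul_of_nonneg_left (hle k) (by linarith)
        _ ≤ (1 + ‖f k₀‖) / 2 := by rw [hε]; linarith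
  linarith

lemma aux_right_sym (f : lp (fun _ : K => X) ∞) (hf : ‖f‖ = 1) (hsym : RightSymPt 𝕜 f)
    (k₀ : K) : RightSymPt 𝕜 (f k₀) := by
  classical
  have hle : ∀ k, ‖f k‖ ≤ 1 := fun k => hf ▸ lp.norm_apply_le_norm (by norm_num) f k
  have hk1 : ‖f k₀‖ = 1 := aux_norm_one (𝕜 := 𝕜) f hf hsym k₀
  intro y hy c₀
  rcases eq_or_ne y 0 with rfl | hy0
  · simp
  by_contra hcon
  push_neg at hcon
  rw [hk1] at hcon
  have hc₀ : c₀ ≠ 0 := by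
    rintro rfl
    rw [zero_smul, add_zero, hk1] at hcon
    exact lt_irrefl _ hcon
  have hc₀n : 0 < ‖c₀‖ := norm_pos_iff.mpr hc₀
  have hy0n : 0 < ‖y‖ := norm_pos_iff.mpr hy0
  set ε : ℝ := min 1 (‖c₀‖ * ‖y‖) with hε
  have hε0 : 0 < ε := lt_min one_pos (mul_pos hc₀n hy0n)
  have hε1 : ε ≤ 1 := min_le_left _ _
  set t : 𝕜 := -(ε : 𝕜) * c₀⁻¹ with ht
  have htn : ‖t‖ ≤ ‖y‖ := by
    rw [ht, norm_mul, norm_neg, RCLike.norm_ofReal, abs_of_nonneg hε0.le, norm_inv,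
      ← div_eq_mul_inv, div_le_iff₀ hc₀n]
    calc ε ≤ ‖c₀‖ * ‖y‖ := min_le_right _ _
      _ = ‖y‖ * ‖c₀‖ := mul_comm _ _
  -- build g
  have hgmem : Memℓp (fun k => if k = k₀ then y else t • f k : ∀ _ : K, X) ∞ := by
    apply memℓp_infty
    refine ⟨‖y‖, ?_⟩
    rintro x ⟨k, rfl⟩
    by_cases h : k = k₀
    · simp [h]
    · simp only [h, if_false]
      calc ‖t • f k‖ = ‖t‖ * ‖f k‖ := norm_smul _ _
        _ ≤ ‖y‖ * 1 := mul_le_mul htn (hle k) (norm_nonneg _) (norm_nonneg _)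
        _ = ‖y‖ := mul_one _
  set g : lp (fun _ : K => X) ∞ := ⟨_, hgmem⟩ with hg
  have hgk : ∀ k, g k = if k = k₀ then y else t • f k := fun _ => rfl
  have hgle : ∀ k, ‖g k‖ ≤ ‖y‖ := by
    intro k; rw [hgk]
    by_cases h : k = k₀
    · simp [h]
    · simp only [h, if_false]
      calc ‖t • f k‖ = ‖t‖ * ‖f k‖ := norm_smul _ _
        _ ≤ ‖y‖ * 1 := mul_le_mul htn (hle k) (norm_nonneg _) (norm_nonneg _)
        _ = ‖y‖ := mul_one _
  have hgnorm : ‖g‖ = ‖y‖ := by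
    refine le_antisymm (lp.norm_le_of_forall_le (norm_nonneg _) hgle) ?_
    have h3 := lp.norm_apply_le_norm (p := (∞ : ℝ≥0∞)) (by norm_num) g k₀
    rwa [hgk k₀, if_pos rfl] at h3
  -- g ⊥_B f
  have hBJ : BJOrth 𝕜 g f := by
    intro c
    rw [hgnorm]
    calc ‖y‖ ≤ ‖y + c • f k₀‖ := hy c
      _ = ‖(g + c • f) k₀‖ := by rw [show (g + c • f) k₀ = g k₀ + c • f k₀ from rfl]; simp [hgk k₀]
      _ ≤ ‖g + c • f‖ := lp.norm_apply_le_norm (by norm_num) _ k₀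
  -- contradiction at c₀
  have hkey := hsym g hBJ c₀
  rw [hf] at hkey
  set M : ℝ := max (1 - ε) ‖f k₀ + c₀ • y‖ with hM
  have hM1 : M < 1 := max_lt (by linarith) hcon
  have hM0 : 0 ≤ M := le_max_of_le_right (norm_nonneg _)
  have hub : ‖f + c₀ • g‖ ≤ M := by
    refine lp.norm_le_of_forall_le hM0 ?_
    intro k
    by_cases h : k = k₀
    · have heq : (f + c₀ • g) k = f k₀ + c₀ • y := by rw [show (f + c₀ • g) k = f k + c₀ • g k from rfl]; simp [hgk k, h]
      rw [heq]; exact le_max_right _ _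
    · have heq : (f + c₀ • g) k = ((1:𝕜) + c₀ * t) • f k := by
        rw [show (f + c₀ • g) k = f k + c₀ • g k from rfl]; simp [hgk k, h, add_smul, mul_smul]
      have hct : (1:𝕜) + c₀ * t = ((1 - ε : ℝ) : 𝕜) := by
        rw [ht]
        field_simp
        push_cast
        ring
      rw [heq, hct, norm_smul, RCLike.norm_ofReal, abs_of_nonneg (by linarith)]
      refine le_max_of_le_left ?_
      calc (1 - ε) * ‖f k‖ ≤ (1 - ε) * 1 :=
            mul_le_mul_of_nonneg_left (hle k) (by linarith)
        _ = 1 - ε := mul_one _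
  linarith

end Aux

/-- A norm-one right symmetric point f of ℓ∞(K, X) satisfies ‖f(k)‖ = 1 and f(k) right symmetric
for every k. -/
theorem stmt5 (𝕜 K X : Type*) [RCLike 𝕜] [Nonempty K]
    [NormedAddCommGroup X] [NormedSpace 𝕜 X] [CompleteSpace X]
    (f : lp (fun _ : K => X) ∞) (hf : ‖f‖ = 1) (hsym : RightSymPt 𝕜 f) :
    ∀ k : K, ‖f k‖ = 1 ∧ RightSymPt 𝕜 (f k) := by
  intro k
  exact ⟨aux_norm_one f hf hsym k, aux_right_sym f hf hsym k⟩
end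

section
/- Let K be a non-empty set with |K| > 1 and X a Banach space. Then the only element of ℓ∞(K, X) that is both left symmetric and right symmetric is the zero function. -/
open scoped ENNReal

section aux
variable {𝕜 K X : Type*} [RCLike 𝕜] [NormedAddCommGroup X] [NormedSpace 𝕜 X]

lemma aux_coord_le (f : lp (fun _ : K => X) ∞) (k : K) : ‖f k‖ ≤ ‖f‖ :=
  lp.norm_apply_le_norm ENNReal.top_ne_zero f k

lemma aux_re_neg {c : 𝕜} (h : ‖1 + c‖ < 1) : RCLike.re c < 0 := by
  have h2 : ‖1 + c‖ ^ 2 < 1 := by nlinarith [norm_nonneg (1 + c)]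
  rw [RCLike.norm_sq_eq_def] at h2
  simp only [map_add, RCLike.one_re, RCLike.one_im] at h2
  nlinarith [sq_nonneg (RCLike.im c)]

lemma aux_norm_sub_ge {c : 𝕜} {t : ℝ} (ht : 0 < t) (hc : RCLike.re c < 0) :
    t ≤ ‖c - (t : 𝕜)‖ := by
  have h2 : t ^ 2 ≤ ‖c - (t:𝕜)‖ ^ 2 := by
    rw [RCLike.norm_sq_eq_def]
    simp only [map_sub, RCLike.ofReal_re, RCLike.ofReal_im, sub_zero]
    nlinarith [sq_nonneg (RCLike.im c)]
  nlinarith [norm_nonneg (c - (t:𝕜))]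
lemma aux_norm_one_sub (r : ℝ) (hr : r ≤ 1) (x : X) :
    ‖x + (-(r:𝕜)) • x‖ = (1 - r) * ‖x‖ := by
  have h1 : x + (-(r:𝕜)) • x = ((1 - r : ℝ) : 𝕜) • x := by
    have h2 : ((1 - r : ℝ) : 𝕜) = 1 + -(r:𝕜) := by push_cast; ring
    rw [h2, add_smul, one_smul, neg_smul]
  rw [h1, norm_smul, RCLike.norm_ofReal, abs_of_nonneg (by linarith)]

end aux

set_option maxHeartbeats 2000000 in
/-- If |K| > 1 then the only symmetric point of ℓ∞(K, X) is zero. -/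
theorem stmt6 (𝕜 K X : Type*) [RCLike 𝕜] [Nontrivial K]
    [NormedAddCommGroup X] [NormedSpace 𝕜 X] [CompleteSpace X]
    (f : lp (fun _ : K => X) ∞) :
    (LeftSymPt 𝕜 f ∧ RightSymPt 𝕜 f) ↔ f = 0 := by
  constructor
  · rintro ⟨hL, hR⟩
    classical
    by_contra hf0
    obtain ⟨k0, ha⟩ : ∃ k, f k ≠ 0 := by
      by_contra h
      push_neg at h
      exact hf0 (lp.eq_zero_iff_coeFn_eq_zero.2 (funext h))
    set a : X := f k0 with ha_def
    have hα : 0 < ‖a‖ := norm_pos_iff.mpr ha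
    have hN : ‖a‖ ≤ ‖f‖ := aux_coord_le f k0
    have hNpos : 0 < ‖f‖ := lt_of_lt_of_le hα hN
    set g : lp (fun _ : K => X) ∞ := lp.single ∞ k0 a with hg
    have hgk0 : g k0 = a := by rw [hg]; exact lp.single_apply_self (E := fun _ : K => X) ∞ k0 a
    have hgne : ∀ k, k ≠ k0 → g k = 0 := fun k hk => by rw [hg]; exact lp.single_apply_ne (E := fun _ : K => X) ∞ k0 a hk
    have hgnorm : ‖g‖ = ‖a‖ := by
      apply le_antisymm
      · refine lp.norm_le_of_forall_le hα.le fun k => ?_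
        by_cases hk : k = k0
        · subst hk; rw [hgk0]
        · rw [hgne k hk]; simpa using hα.le
      · rw [← hgk0]; exact aux_coord_le g k0
    by_cases hBJ : BJOrth 𝕜 f g
    · -- Case A : left symmetry fails
      have hgf := hL g hBJ
      set t : ℝ := ‖a‖ / (2 * ‖f‖) with ht_def
      have ht0 : 0 < t := div_pos hα (by positivity)
      have htf : t * ‖f‖ = ‖a‖ / 2 := by
          rw [ht_def, div_mul_eq_mul_div, div_eq_div_iff (by positivity) (by norm_num)]; ring
      have ht1 : t ≤ 1/2 := by
        rw [ht_def, div_le_div_iff₀ (by positivity) (by norm_num)]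
        nlinarith
      have hcn : ‖(-(t:𝕜))‖ = t := by
        rw [norm_neg, RCLike.norm_ofReal, abs_of_pos ht0]
      have hbound : ‖g + (-(t:𝕜)) • f‖ ≤ (1 - t) * ‖a‖ := by
        refine lp.norm_le_of_forall_le (by nlinarith) fun k => ?_
        have hco : (g + (-(t:𝕜)) • f) k = g k + (-(t:𝕜)) • f k := by
          rfl
        rw [hco]
        by_cases hk : k = k0
        · subst hk
          rw [hgk0]
          have : a + (-(t:𝕜)) • a = ((1 - t : ℝ) : 𝕜) • a := by
            have h1 : ((1 - t : ℝ) : 𝕜) = 1 + -(t:𝕜) := by push_cast; ring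
            rw [h1, add_smul, one_smul, neg_smul]
          rw [this, norm_smul, RCLike.norm_ofReal, abs_of_nonneg (by linarith)]
        · rw [hgne k hk, zero_add, norm_smul, hcn]
          calc t * ‖f k‖ ≤ t * ‖f‖ := by
                exact mul_le_mul_of_nonneg_left (aux_coord_le f k) ht0.le
            _ = ‖a‖ / 2 := htf
            _ ≤ (1 - t) * ‖a‖ := by nlinarith
      have := hgf (-(t:𝕜))
      rw [hgnorm] at this
      nlinarith [lt_of_le_of_lt (this.trans hbound) (by nlinarith : (1-t)*‖a‖ < ‖a‖)]
    · -- Case B : right symmetry fails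
      obtain ⟨c0, hc0⟩ : ∃ c : 𝕜, ‖f + c • g‖ < ‖f‖ := by
        simp only [BJOrth, not_forall, not_le] at hBJ
        exact hBJ
      set N' : ℝ := ‖f + c0 • g‖ with hN'
      have hN0 : 0 ≤ N' := norm_nonneg _
      have hsmall : ∀ k, k ≠ k0 → ‖f k‖ ≤ N' := by
        intro k hk
        have he : (f + c0 • g) k = f k := by
          show f k + c0 • g k = f k
          rw [hgne k hk, smul_zero, add_zero]
        calc ‖f k‖ = ‖(f + c0 • g) k‖ := by rw [he]
          _ ≤ N' := aux_coord_le _ k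
      obtain ⟨k1, hk1⟩ := exists_ne k0
      set b : X := f k1 with hb_def
      have hbN : ‖b‖ ≤ N' := hsmall k1 hk1
      have hbf : ‖b‖ < ‖f‖ := lt_of_le_of_lt hbN hc0
      have haf : ‖a‖ = ‖f‖ := by
        refine le_antisymm hN ?_
        by_contra hlt
        push_neg at hlt
        have hle : ‖f‖ ≤ max ‖a‖ N' := by
          refine lp.norm_le_of_forall_le (le_max_of_le_left hα.le) fun k => ?_
          by_cases hk : k = k0
          · subst hk; exact le_max_left _ _
          · exact le_max_of_le_right (hsmall k hk)
        rcases max_cases ‖a‖ N' with ⟨h1,_⟩|⟨h1,_⟩ <;> rw [h1] at hle <;> linarith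
      -- choose the k1-value w
      by_cases hb0 : b = 0
      · -- w = a
        set y : lp (fun _ : K => X) ∞ := g + lp.single ∞ k1 a with hy
        have hsk1 : (lp.single ∞ k1 a : lp (fun _ : K => X) ∞) k1 = a :=
          lp.single_apply_self (E := fun _ : K => X) ∞ k1 a
        have hsne : ∀ k, k ≠ k1 → (lp.single ∞ k1 a : lp (fun _ : K => X) ∞) k = 0 :=
          fun k hk => lp.single_apply_ne (E := fun _ : K => X) ∞ k1 a hk
        have hyco : ∀ k, y k = g k + (lp.single ∞ k1 a : lp (fun _ : K => X) ∞) k := by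
          intro k; rw [hy]; simp [lp.coeFn_add]
        have hyk0 : y k0 = a := by rw [hyco, hgk0, hsne k0 (Ne.symm hk1), add_zero]
        have hyk1 : y k1 = a := by rw [hyco, hgne k1 hk1, hsk1, zero_add]
        have hyne : ∀ k, k ≠ k0 → k ≠ k1 → y k = 0 := by
          intro k h0 h1; rw [hyco, hgne k h0, hsne k h1, add_zero]
        have hynorm : ‖y‖ = ‖a‖ := by
          refine le_antisymm (lp.norm_le_of_forall_le hα.le fun k => ?_) ?_
          · by_cases h0 : k = k0
            · subst h0; rw [hyk0]
            · by_cases h1 : k = k1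
              · subst h1; rw [hyk1]
              · rw [hyne k h0 h1, norm_zero]; exact hα.le
          · rw [← hyk0]; exact aux_coord_le y k0
        have hyf : BJOrth 𝕜 y f := by
          intro c
          have he : (y + c • f) k1 = a := by
            have : (y + c • f) k1 = y k1 + c • f k1 := by
              rfl
            rw [this, hyk1, ← hb_def, hb0, smul_zero, add_zero]
          rw [hynorm]
          calc ‖a‖ = ‖(y + c • f) k1‖ := by rw [he]
            _ ≤ ‖y + c • f‖ := aux_coord_le _ k1
        have hfy := hR y hyf ((-(((1:ℝ)/2 : ℝ) : 𝕜)))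
        have hbound : ‖f + (-(((1:ℝ)/2 : ℝ) : 𝕜)) • y‖ ≤ max (‖f‖/2) N' := by
          refine lp.norm_le_of_forall_le (le_max_of_le_right hN0) fun k => ?_
          have hco2 : (f + (-(((1:ℝ)/2 : ℝ):𝕜)) • y) k = f k + (-(((1:ℝ)/2 : ℝ):𝕜)) • y k := by
            rfl
          rw [hco2]
          by_cases h0 : k = k0
          · subst h0
            rw [← ha_def, hyk0, aux_norm_one_sub (𝕜 := 𝕜) (1/2) (by norm_num) a]
            refine le_max_of_le_left ?_
            rw [haf]; linarith
          · by_cases h1 : k = k1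
            · subst h1
              rw [← hb_def, hb0, hyk1, zero_add, norm_smul, norm_neg, RCLike.norm_ofReal]
              refine le_max_of_le_left ?_
              rw [abs_of_pos (by norm_num : (0:ℝ) < 1/2)]
              calc (1/2) * ‖a‖ = ‖a‖ / 2 := by ring
                _ ≤ ‖f‖ / 2 := by linarith
            · rw [hyne k h0 h1, smul_zero, add_zero]
              exact le_max_of_le_right (hsmall k h0)
        have : ‖f‖ ≤ max (‖f‖/2) N' := le_trans hfy hbound
        rcases max_cases (‖f‖/2) N' with ⟨h1,_⟩|⟨h1,_⟩ <;> rw [h1] at this <;> linarith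
      · -- w = -(t) • b with t = ‖f‖/‖b‖
        have hβ : 0 < ‖b‖ := norm_pos_iff.mpr hb0
        set t : ℝ := ‖f‖ / ‖b‖ with ht_def
        have ht0 : 0 < t := div_pos hNpos hβ
        have htb : t * ‖b‖ = ‖f‖ := div_mul_cancel₀ _ hβ.ne'
        set w : X := (-(t:𝕜)) • b with hw
        have hwnorm : ‖w‖ = ‖f‖ := by
          rw [hw, norm_smul, norm_neg, RCLike.norm_ofReal, abs_of_pos ht0, htb]
        set y : lp (fun _ : K => X) ∞ := g + lp.single ∞ k1 w with hy
        have hsk1 : (lp.single ∞ k1 w : lp (fun _ : K => X) ∞) k1 = w :=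
          lp.single_apply_self (E := fun _ : K => X) ∞ k1 w
        have hsne : ∀ k, k ≠ k1 → (lp.single ∞ k1 w : lp (fun _ : K => X) ∞) k = 0 :=
          fun k hk => lp.single_apply_ne (E := fun _ : K => X) ∞ k1 w hk
        have hyco : ∀ k, y k = g k + (lp.single ∞ k1 w : lp (fun _ : K => X) ∞) k := by
          intro k; rw [hy]; simp [lp.coeFn_add]
        have hyk0 : y k0 = a := by rw [hyco, hgk0, hsne k0 (Ne.symm hk1), add_zero]
        have hyk1 : y k1 = w := by rw [hyco, hgne k1 hk1, hsk1, zero_add]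
        have hyne : ∀ k, k ≠ k0 → k ≠ k1 → y k = 0 := by
          intro k h0 h1; rw [hyco, hgne k h0, hsne k h1, add_zero]
        have hynorm : ‖y‖ = ‖f‖ := by
          refine le_antisymm (lp.norm_le_of_forall_le hNpos.le fun k => ?_) ?_
          · by_cases h0 : k = k0
            · subst h0; rw [hyk0, haf]
            · by_cases h1 : k = k1
              · subst h1; rw [hyk1, hwnorm]
              · rw [hyne k h0 h1, norm_zero]; exact hNpos.le
          · rw [← haf, ← hyk0]; exact aux_coord_le y k0
        have hyf : BJOrth 𝕜 y f := by
          intro c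
          rw [hynorm]
          have hco2 : ∀ k, (y + c • f) k = y k + c • f k := by
            intro k; rfl
          by_cases h1 : 1 ≤ ‖(1:𝕜) + c‖
          · have he : (y + c • f) k0 = ((1:𝕜) + c) • a := by
              rw [hco2, hyk0, ← ha_def, add_smul, one_smul]
            calc ‖f‖ = ‖a‖ := haf.symm
              _ ≤ ‖(1:𝕜) + c‖ * ‖a‖ := le_mul_of_one_le_left hα.le h1
              _ = ‖(y + c • f) k0‖ := by rw [he, norm_smul]
              _ ≤ ‖y + c • f‖ := aux_coord_le _ k0
          · push_neg at h1
            have hre : RCLike.re c < 0 := aux_re_neg h1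
            have he : (y + c • f) k1 = (c - (t:𝕜)) • b := by
              rw [hco2, hyk1, ← hb_def, hw, sub_smul, neg_smul]
              abel
            calc ‖f‖ = t * ‖b‖ := htb.symm
              _ ≤ ‖c - (t:𝕜)‖ * ‖b‖ :=
                mul_le_mul_of_nonneg_right (aux_norm_sub_ge ht0 hre) hβ.le
              _ = ‖(y + c • f) k1‖ := by rw [he, norm_smul]
              _ ≤ ‖y + c • f‖ := aux_coord_le _ k1
        set s : ℝ := (‖f‖ - ‖b‖) / (2 * ‖f‖) with hs_def
        have hs0 : 0 < s := div_pos (by linarith) (by positivity)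
        have hs1 : s ≤ 1/2 := by
          rw [hs_def, div_le_div_iff₀ (by positivity) (by norm_num)]
          nlinarith [norm_nonneg b]
        have hsf : s * ‖f‖ = (‖f‖ - ‖b‖) / 2 := by
          rw [hs_def, div_mul_eq_mul_div, div_eq_div_iff (by positivity) (by norm_num)]; ring
        have hfy := hR y hyf (-(s : 𝕜))
        have hbound : ‖f + (-(s:𝕜)) • y‖ ≤ max ((1-s) * ‖f‖) (max ((‖f‖ + ‖b‖)/2) N') := by
          refine lp.norm_le_of_forall_le (le_max_of_le_left (by nlinarith)) fun k => ?_
          have hco2 : (f + (-(s:𝕜)) • y) k = f k + (-(s:𝕜)) • y k := by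
            rfl
          rw [hco2]
          by_cases h0 : k = k0
          · subst h0
            rw [← ha_def, hyk0, aux_norm_one_sub (𝕜 := 𝕜) s (by linarith) a, haf]
            exact le_max_left _ _
          · by_cases h1 : k = k1
            · subst h1
              have he : b + (-(s:𝕜)) • w = ((1 + s*t : ℝ) : 𝕜) • b := by
                rw [hw, smul_smul]
                have h2 : (-(s:𝕜)) * (-(t:𝕜)) = ((s*t : ℝ) : 𝕜) := by push_cast; ring
                have h3 : ((1 + s*t : ℝ) : 𝕜) = 1 + ((s*t : ℝ) : 𝕜) := by push_cast; ring
                rw [h2, h3, add_smul, one_smul]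
              rw [← hb_def, hyk1, he, norm_smul, RCLike.norm_ofReal,
                abs_of_pos (by nlinarith : (0:ℝ) < 1 + s*t)]
              refine le_max_of_le_right (le_max_of_le_left ?_)
              have : (1 + s*t) * ‖b‖ = ‖b‖ + s * (t * ‖b‖) := by ring
              rw [this, htb, hsf]
              linarith
            · rw [hyne k h0 h1, smul_zero, add_zero]
              exact le_max_of_le_right (le_max_of_le_right (hsmall k h0))
        have hlt : max ((1-s) * ‖f‖) (max ((‖f‖ + ‖b‖)/2) N') < ‖f‖ := by
          refine max_lt (by nlinarith) (max_lt (by linarith) hc0)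
        linarith [le_trans hfy hbound]
  · rintro rfl
    constructor
    · intro y _ c
      rw [smul_zero, add_zero]
    · intro y _ c
      rw [norm_zero]
      exact norm_nonneg _
end

section
/- Let K be a compact Hausdorff space and X a real Banach space. For f, g ∈ C(K, X) with f ≠ 0, f ⊥_B g if and only if there exist k₁, k₂ ∈ M_f such that g(k₁) ∈ f(k₁)⁺ and g(k₂) ∈ f(k₂)⁻. -/
open scoped ENNReal

/-- convexity step -/
lemma key_conv {X : Type*} [NormedAddCommGroup X] [NormedSpace ℝ X]
    (x y : X) (c t s : ℝ) (ht : 0 < t) (hts : t ≤ s)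
    (h0 : ‖x‖ ≤ c) (h : c ≤ ‖x + t • y‖) : c ≤ ‖x + s • y‖ := by
  have hs : 0 < s := ht.trans_le hts
  have hid : x + t • y = (1 - t/s) • x + (t/s) • (x + s • y) := by
    rw [smul_add, smul_smul, div_mul_cancel₀ _ hs.ne']
    rw [sub_smul, one_smul]
    abel
  have hle : ‖x + t • y‖ ≤ (1 - t/s) * ‖x‖ + (t/s) * ‖x + s • y‖ := by
    rw [hid]
    refine (norm_add_le _ _).trans ?_
    rw [norm_smul, norm_smul,
      Real.norm_of_nonneg (by nlinarith [div_le_one_of_le₀ hts hs.le]),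
      Real.norm_of_nonneg (by positivity)]
  have hd : t/s ≤ 1 := div_le_one_of_le₀ hts hs.le
  have hdp : 0 < t/s := div_pos ht hs
  nlinarith [norm_nonneg (x + s • y)]

lemma half {K X : Type*} [TopologicalSpace K] [CompactSpace K]
    [NormedAddCommGroup X] [NormedSpace ℝ X]
    (f g : C(K, X)) (hf : f ≠ 0) (hbj : BJOrth ℝ f g) :
    ∃ k : K, ‖f k‖ = ‖f‖ ∧ InPlus (f k) (g k) := by
  have hK : Nonempty K := by
    by_contra h
    exact hf (by ext k; exact absurd ⟨k⟩ h)
  set A : {t : ℝ // 0 < t} → Set K := fun t => {k | ‖f‖ ≤ ‖f k + t.1 • g k‖} with hA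
  have hcont : ∀ t : ℝ, Continuous fun k => ‖f k + t • g k‖ := fun t =>
    (f.continuous.add (g.continuous.const_smul t)).norm
  have hclosed : ∀ t, IsClosed (A t) := fun t =>
    isClosed_le continuous_const (hcont t.1)
  have hne : ∀ t, (A t).Nonempty := by
    rintro ⟨t, ht⟩
    obtain ⟨k, -, hk⟩ := isCompact_univ.exists_isMaxOn Set.univ_nonempty
      (hcont t).continuousOn
    refine ⟨k, ?_⟩
    have h1 : ‖f‖ ≤ ‖f + t • g‖ := hbj t
    have h2 : ‖f + t • g‖ ≤ ‖f k + t • g k‖ := by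
      refine (ContinuousMap.norm_le _ (norm_nonneg _)).2 fun x => ?_
      simpa using hk (Set.mem_univ x)
    exact h1.trans h2
  have hdir : Directed (· ⊇ ·) A := by
    rintro ⟨t, ht⟩ ⟨s, hs⟩
    refine ⟨⟨min t s, lt_min ht hs⟩, fun k hk => ?_, fun k hk => ?_⟩ <;>
      exact key_conv _ _ _ _ _ (lt_min ht hs) (by simp) (f.norm_coe_le_norm k) hk
  obtain ⟨k, hk⟩ := IsCompact.nonempty_iInter_of_directed_nonempty_isCompact_isClosed
    A hdir hne (fun t => (hclosed t).isCompact) hclosed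
  simp only [Set.mem_iInter] at hk
  have hk' : ∀ t : ℝ, 0 < t → ‖f‖ ≤ ‖f k + t • g k‖ := fun t ht => hk ⟨t, ht⟩
  have hnorm : ‖f k‖ = ‖f‖ := by
    refine le_antisymm (f.norm_coe_le_norm k) ?_
    refine le_of_forall_pos_le_add fun ε hε => ?_
    set t : ℝ := ε / (‖g k‖ + 1) with htdef
    have htp : 0 < t := by positivity
    have := (hk' t htp).trans ((norm_add_le _ _).trans_eq (by
      rw [norm_smul, Real.norm_of_nonneg htp.le]))
    have hlt : t * ‖g k‖ < ε := by
      rw [htdef, div_mul_eq_mul_div, div_lt_iff₀ (by positivity)]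
      nlinarith [norm_nonneg (g k)]
    linarith
  refine ⟨k, hnorm, fun t ht => ?_⟩
  rcases ht.eq_or_lt with h | h
  · simp [← h]
  · exact hnorm.le.trans (hk' t h)

/-- Characterization of Birkhoff-James orthogonality in C(K, X), K compact Hausdorff,
X a real Banach space. -/
theorem stmt7 (K X : Type*) [TopologicalSpace K] [CompactSpace K] [T2Space K]
    [NormedAddCommGroup X] [NormedSpace ℝ X] [CompleteSpace X]
    (f g : C(K, X)) (hf : f ≠ 0) :
    BJOrth ℝ f g ↔ ∃ k₁ k₂ : K, ‖f k₁‖ = ‖f‖ ∧ ‖f k₂‖ = ‖f‖ ∧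
      InPlus (f k₁) (g k₁) ∧ InMinus (f k₂) (g k₂) := by
  constructor
  · intro hbj
    obtain ⟨k₁, h₁, hp₁⟩ := half f g hf hbj
    have hbj' : BJOrth ℝ f (-g) := fun c => by
      have := hbj (-c)
      simpa [neg_smul, smul_neg] using this
    obtain ⟨k₂, h₂, hp₂⟩ := half f (-g) hf hbj'
    refine ⟨k₁, k₂, h₁, h₂, hp₁, fun t ht => ?_⟩
    have := hp₂ (-t) (by linarith)
    simpa [smul_neg, neg_smul] using this
  · rintro ⟨k₁, k₂, h₁, h₂, hp, hm⟩ c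
    rcases le_or_gt 0 c with hc | hc
    · calc ‖f‖ = ‖f k₁‖ := h₁.symm
        _ ≤ ‖f k₁ + c • g k₁‖ := hp c hc
        _ = ‖(f + c • g) k₁‖ := by simp
        _ ≤ ‖f + c • g‖ := ContinuousMap.norm_coe_le_norm _ _
    · calc ‖f‖ = ‖f k₂‖ := h₂.symm
        _ ≤ ‖f k₂ + c • g k₂‖ := hm c hc.le
        _ = ‖(f + c • g) k₂‖ := by simp
        _ ≤ ‖f + c • g‖ := ContinuousMap.norm_coe_le_norm _ _
end

section
/- Let K be a compact Hausdorff space and X a real Banach space. If f ∈ C(K, X) satisfies ||f(k)|| = 1 and f(k) is a right symmetric point of X for every k ∈ K, then f is a right symmetric point of C(K, X). -/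
open scoped ENNReal

section Aux

variable {X : Type*} [NormedAddCommGroup X] [NormedSpace ℝ X]

/-- Convexity step: if the norm at parameter `s` is at least `c ≥ ‖a‖`, it stays `≥ c` beyond. -/
lemma aux_convex_step (a b : X) (c s t : ℝ) (h0 : ‖a‖ ≤ c) (hs : 0 < s) (hst : s ≤ t)
    (h1 : c ≤ ‖a + s • b‖) : c ≤ ‖a + t • b‖ := by
  have ht : 0 < t := lt_of_lt_of_le hs hst
  set θ : ℝ := s / t with hθ
  have hθ0 : 0 < θ := div_pos hs ht
  have hθ1 : θ ≤ 1 := (div_le_one ht).mpr hst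
  have hθt : θ * t = s := div_mul_cancel₀ s ht.ne'
  have hdecomp : a + s • b = (1 - θ) • a + θ • (a + t • b) := by
    rw [smul_add, smul_smul, hθt, sub_smul, one_smul]
    abel
  have hle : ‖a + s • b‖ ≤ (1 - θ) * ‖a‖ + θ * ‖a + t • b‖ := by
    rw [hdecomp]
    calc ‖(1 - θ) • a + θ • (a + t • b)‖ ≤ ‖(1 - θ) • a‖ + ‖θ • (a + t • b)‖ := norm_add_le _ _
    _ = (1 - θ) * ‖a‖ + θ * ‖a + t • b‖ := by
        rw [norm_smul, norm_smul, Real.norm_eq_abs, Real.norm_eq_abs,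
          abs_of_nonneg (by linarith), abs_of_nonneg hθ0.le]
  nlinarith [h1.trans hle]

/-- Key pointwise lemma: if `u` is right symmetric with `‖u‖ = 1` and `u ∈ x⁺`, then
`‖u + μ • x‖ ≥ 1` for all `μ ≥ 0`. -/
lemma aux_key_plus (x u : X) (hu : ‖u‖ = 1) (hsym : RightSymPt ℝ u) (hplus : InPlus x u) :
    ∀ μ : ℝ, 0 ≤ μ → 1 ≤ ‖u + μ • x‖ := by
  -- minimize ‖x + t • u‖ over [-2‖x‖, 0]
  have hneg : -(2 * ‖x‖) ≤ (0:ℝ) := neg_nonpos.mpr (by positivity)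
  have hIcc : Set.Nonempty (Set.Icc (-(2 * ‖x‖)) (0 : ℝ)) := ⟨0, hneg, le_refl 0⟩
  obtain ⟨t₀, ht₀mem, ht₀⟩ := isCompact_Icc.exists_isMinOn hIcc
    (Continuous.continuousOn (by continuity : Continuous fun t : ℝ => ‖x + t • u‖))
  have ht₀le : t₀ ≤ 0 := ht₀mem.2
  have hglobal : ∀ s : ℝ, ‖x + t₀ • u‖ ≤ ‖x + s • u‖ := by
    intro s
    rcases le_or_gt s 0 with hs | hs
    · rcases le_or_gt (-(2 * ‖x‖)) s with hs' | hs'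
      · exact ht₀ ⟨hs', hs⟩
      · have h0mem : (0:ℝ) ∈ Set.Icc (-(2 * ‖x‖)) (0:ℝ) := ⟨hneg, le_refl 0⟩
        have h1 : ‖x + t₀ • u‖ ≤ ‖x‖ := by simpa using ht₀ h0mem
        have h2 : ‖x‖ ≤ ‖x + s • u‖ := by
          have hle : ‖s • u‖ ≤ ‖x + s • u‖ + ‖x‖ := by
            calc ‖s • u‖ = ‖(x + s • u) - x‖ := by rw [add_sub_cancel_left]
            _ ≤ ‖x + s • u‖ + ‖x‖ := norm_sub_le _ _
          have hsu : ‖s • u‖ = -s := by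
            rw [norm_smul, Real.norm_eq_abs, hu, mul_one, abs_of_neg (by linarith)]
          nlinarith
        linarith
    · have h0mem : (0:ℝ) ∈ Set.Icc (-(2 * ‖x‖)) (0:ℝ) := ⟨hneg, le_refl 0⟩
      have h1 : ‖x + t₀ • u‖ ≤ ‖x‖ := by simpa using ht₀ h0mem
      exact h1.trans (hplus s hs.le)
  set w : X := x + t₀ • u with hw
  have hwu : BJOrth ℝ w u := by
    intro c
    have : w + c • u = x + (t₀ + c) • u := by rw [hw, add_smul]; abel
    rw [this]
    exact hglobal (t₀ + c)
  have huw : BJOrth ℝ u w := hsym w hwu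
  intro μ hμ
  have hα : (1:ℝ) ≤ 1 - μ * t₀ := by nlinarith
  set α : ℝ := 1 - μ * t₀ with hαdef
  have hα0 : 0 < α := by linarith
  have hdecomp : u + μ • x = α • (u + (μ / α) • w) := by
    rw [smul_add, smul_smul, mul_div_cancel₀ μ hα0.ne', hw, smul_add, smul_smul, hαdef]
    rw [sub_smul, one_smul]
    module
  rw [hdecomp, norm_smul, Real.norm_eq_abs, abs_of_pos hα0]
  calc (1:ℝ) = 1 * 1 := (one_mul 1).symm
  _ ≤ α * ‖u + (μ / α) • w‖ := by
      apply mul_le_mul hα _ zero_le_one (by linarith)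
      have := huw (μ / α)
      rw [hu] at this; exact this

end Aux

section AuxK

variable {K X : Type*} [TopologicalSpace K] [CompactSpace K]
  [NormedAddCommGroup X] [NormedSpace ℝ X]

/-- Norm attainment in C(K, X). -/
lemma aux_exists_norm_eq [Nonempty K] (h : C(K, X)) : ∃ k : K, ‖h‖ ≤ ‖h k‖ := by
  obtain ⟨k, -, hk⟩ := isCompact_univ.exists_isMaxOn Set.univ_nonempty
    (Continuous.continuousOn ((map_continuous h).norm))
  refine ⟨k, ?_⟩
  exact (ContinuousMap.norm_le h (norm_nonneg _)).mpr fun x => hk (Set.mem_univ x)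

/-- If `‖g + t • f‖ ≥ ‖g‖` for all `t > 0`, then `f k ∈ (g k)⁺` for some `k`. -/
lemma aux_exists_inPlus [Nonempty K] (f g : C(K, X))
    (h : ∀ t : ℝ, 0 < t → ‖g‖ ≤ ‖g + t • f‖) : ∃ k : K, InPlus (g k) (f k) := by
  have hpos : ∀ n : ℕ, (0:ℝ) < 1 / (n + 1) := fun n => by positivity
  have hsel : ∀ n : ℕ, ∃ k : K, ‖g‖ ≤ ‖g k + (1 / ((n:ℝ) + 1)) • f k‖ := by
    intro n
    obtain ⟨k, hk⟩ := aux_exists_norm_eq (g + (1 / ((n:ℝ) + 1)) • f)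
    refine ⟨k, ?_⟩
    have := (h _ (hpos n)).trans hk
    simpa using this
  choose u hu using hsel
  obtain ⟨k₁, hk₁⟩ : ∃ k : K, MapClusterPt k Filter.atTop u :=
    exists_clusterPt_of_compactSpace _
  refine ⟨k₁, ?_⟩
  intro t ht
  rcases eq_or_lt_of_le ht with rfl | ht
  · simp
  have hgk : ‖g k₁‖ ≤ ‖g‖ := ContinuousMap.norm_coe_le_norm g k₁
  suffices hC : ‖g‖ ≤ ‖g k₁ + t • f k₁‖ by linarith
  set C : Set K := {k : K | ‖g‖ ≤ ‖g k + t • f k‖} with hCdef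
  have hCclosed : IsClosed C := by
    have : C = (fun k => ‖g k + t • f k‖) ⁻¹' Set.Ici ‖g‖ := rfl
    rw [this]
    exact IsClosed.preimage (((map_continuous g).add ((map_continuous f).const_smul t)).norm)
      isClosed_Ici
  obtain ⟨N, hN⟩ := exists_nat_ge (1 / t)
  have hev : ∀ n : ℕ, N ≤ n → u n ∈ C := by
    intro n hn
    have hs : (1:ℝ) / ((n:ℝ) + 1) ≤ t := by
      rw [div_le_iff₀ (by positivity)]
      have : 1 / t ≤ (n:ℝ) + 1 := by
        calc 1 / t ≤ (N:ℝ) := hN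
        _ ≤ (n:ℝ) + 1 := by exact_mod_cast le_trans (Nat.cast_le.mpr hn) (by linarith)
      calc (1:ℝ) = t * (1 / t) := by field_simp
      _ ≤ t * ((n:ℝ) + 1) := by nlinarith
    exact aux_convex_step (g (u n)) (f (u n)) ‖g‖ _ t
      (ContinuousMap.norm_coe_le_norm g (u n)) (hpos n) hs (hu n)
  have hCmem : C ∈ Filter.map u Filter.atTop := by
    rw [Filter.mem_map]
    exact Filter.mem_of_superset (Filter.mem_atTop N) hev
  have : ClusterPt k₁ (Filter.principal C) := hk₁.clusterPt.mono (Filter.le_principal_iff.mpr hCmem)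
  have hmem : k₁ ∈ closure C := mem_closure_iff_clusterPt.mpr this
  rwa [hCclosed.closure_eq] at hmem

end AuxK

/-- Sufficiency for right symmetry in C(K, X). -/
theorem stmt8 (K X : Type*) [TopologicalSpace K] [CompactSpace K] [T2Space K]
    [NormedAddCommGroup X] [NormedSpace ℝ X] [CompleteSpace X]
    (f : C(K, X)) (h1 : ∀ k : K, ‖f k‖ = 1) (h2 : ∀ k : K, RightSymPt ℝ (f k)) :
    RightSymPt ℝ f := by
  intro g hgf
  rcases isEmpty_or_nonempty K with hK | hK
  · intro c
    have : f = 0 := by ext k; exact isEmptyElim k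
    simp [this]
  -- ‖f‖ = 1
  have hf1 : ‖f‖ = 1 := by
    apply le_antisymm
    · exact (ContinuousMap.norm_le f zero_le_one).mpr fun k => le_of_eq (h1 k)
    · obtain ⟨k⟩ := hK
      calc (1:ℝ) = ‖f k‖ := (h1 k).symm
      _ ≤ ‖f‖ := ContinuousMap.norm_coe_le_norm f k
  obtain ⟨k₁, hk₁⟩ : ∃ k : K, InPlus (g k) (f k) :=
    aux_exists_inPlus f g (fun t _ => hgf t)
  obtain ⟨k₂, hk₂⟩ : ∃ k : K, InPlus (g k) (-(f k)) := by
    have := aux_exists_inPlus (-f) g (fun t ht => by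
      have := hgf (-t)
      simpa [neg_smul, smul_neg, sub_eq_add_neg] using this)
    simpa using this
  have hkey₁ : ∀ μ : ℝ, 0 ≤ μ → 1 ≤ ‖f k₁ + μ • g k₁‖ :=
    aux_key_plus (g k₁) (f k₁) (h1 k₁) (h2 k₁) hk₁
  have hsymneg : RightSymPt ℝ (-(f k₂)) := by
    intro y hy c
    have hy' : BJOrth ℝ y (f k₂) := by
      intro c'
      have := hy (-c')
      simpa [neg_smul, smul_neg, sub_eq_add_neg] using this
    have := h2 k₂ y hy' (-c)
    calc ‖-f k₂‖ = ‖f k₂‖ := norm_neg _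
    _ ≤ ‖f k₂ + (-c) • y‖ := this
    _ = ‖-(f k₂ + (-c) • y)‖ := (norm_neg _).symm
    _ = ‖-f k₂ + c • y‖ := by rw [neg_add, neg_smul, neg_neg]
  have hkey₂ : ∀ μ : ℝ, 0 ≤ μ → 1 ≤ ‖-(f k₂) + μ • g k₂‖ := by
    apply aux_key_plus (g k₂) (-(f k₂)) (by rw [norm_neg]; exact h1 k₂) hsymneg hk₂
  intro c
  rw [hf1]
  rcases le_or_gt 0 c with hc | hc
  · calc (1:ℝ) ≤ ‖f k₁ + c • g k₁‖ := hkey₁ c hc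
    _ = ‖(f + c • g) k₁‖ := by simp
    _ ≤ ‖f + c • g‖ := ContinuousMap.norm_coe_le_norm _ k₁
  · calc (1:ℝ) ≤ ‖-(f k₂) + (-c) • g k₂‖ := hkey₂ (-c) (by linarith)
    _ = ‖-((f k₂) + c • g k₂)‖ := by rw [neg_smul, neg_add]
    _ = ‖(f + c • g) k₂‖ := by rw [norm_neg]; simp
    _ ≤ ‖f + c • g‖ := ContinuousMap.norm_coe_le_norm _ k₂
end

section
/- Let K be a compact Hausdorff space and X a real Banach space. If f ∈ C(K, X) with ||f|| = 1 is a right symmetric point of C(K, X), then ||f(k)|| = 1 for every k ∈ K and f(k) is a right symmetric point of X for every k ∈ K. -/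
open scoped ENNReal

open Set in
private lemma stmt9_exists_norm_apply_eq {K X : Type*} [TopologicalSpace K] [CompactSpace K]
    [NormedAddCommGroup X] (f : C(K, X)) (hK : Nonempty K) : ∃ k, ‖f k‖ = ‖f‖ := by
  obtain ⟨k, -, hk⟩ := isCompact_univ.exists_isMaxOn univ_nonempty
    (f.continuous.norm.continuousOn)
  refine ⟨k, le_antisymm (f.norm_coe_le_norm k) ?_⟩
  rw [ContinuousMap.norm_le _ (norm_nonneg _)]
  exact fun x => hk (mem_univ x)

set_option maxHeartbeats 1000000

open Set in
/-- Necessity for right symmetry in C(K, X). -/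
theorem stmt9 (K X : Type*) [TopologicalSpace K] [CompactSpace K] [T2Space K]
    [NormedAddCommGroup X] [NormedSpace ℝ X] [CompleteSpace X]
    (f : C(K, X)) (hf : ‖f‖ = 1) (hsym : RightSymPt ℝ f) :
    ∀ k : K, ‖f k‖ = 1 ∧ RightSymPt ℝ (f k) := by
  classical
  have hK : Nonempty K := by
    by_contra h
    have hf0 : f = 0 := by ext k; exact absurd ⟨k⟩ h
    rw [hf0, norm_zero] at hf; norm_num at hf
  obtain ⟨ks, hks⟩ := stmt9_exists_norm_apply_eq f hK
  rw [hf] at hks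
  -- Part 1 : the norm is attained everywhere
  have hnorm : ∀ k, ‖f k‖ = 1 := by
    intro k₀
    by_contra hne
    have hlt : ‖f k₀‖ < 1 := lt_of_le_of_ne (hf ▸ f.norm_coe_le_norm k₀) hne
    set ε : ℝ := (1 - ‖f k₀‖) / 3 with hεdef
    have hε : 0 < ε := by rw [hεdef]; linarith
    have hε3 : ε ≤ 1/3 := by rw [hεdef]; have := norm_nonneg (f k₀); linarith
    have hU0 : ‖f k₀‖ < 1 - 2*ε := by rw [hεdef]; linarith
    set U : Set K := {k | ‖f k‖ < 1 - 2*ε} with hUdef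
    have hUopen : IsOpen U := isOpen_lt f.continuous.norm continuous_const
    have hk₀U : k₀ ∈ U := hU0
    obtain ⟨φ, hφ0, hφ1, hφmem⟩ := exists_continuous_zero_one_of_isClosed
      hUopen.isClosed_compl isClosed_singleton
      (disjoint_singleton_right.mpr (fun hc => hc hk₀U))
    have hφk₀ : φ k₀ = 1 := hφ1 rfl
    have hφks : φ ks = 0 := by
      refine hφ0 ?_
      simp only [mem_compl_iff, hUdef, mem_setOf_eq, not_lt]
      linarith
    set u : X := if f k₀ = 0 then f ks else -(‖f k₀‖⁻¹) • f k₀ with hudef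
    have hu : ‖u‖ = 1 := by
      rw [hudef]; split_ifs with h
      · exact hks
      · have hfk : 0 < ‖f k₀‖ := norm_pos_iff.2 h
        rw [norm_smul, norm_neg, norm_inv, norm_norm]
        field_simp
    set g : C(K, X) := ⟨fun k => ε • (φ k • u + (1 - φ k) • f k), by fun_prop⟩ with hgdef
    have hgk : ∀ k, g k = ε • (φ k • u + (1 - φ k) • f k) := fun _ => rfl
    have hgle : ‖g‖ ≤ ε := by
      rw [ContinuousMap.norm_le _ hε.le]
      intro k
      obtain ⟨h1, h2⟩ := hφmem k
      have hfk1 : ‖f k‖ ≤ 1 := hf ▸ f.norm_coe_le_norm k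
      calc ‖g k‖ ≤ ε * (‖φ k • u‖ + ‖(1 - φ k) • f k‖) := by
            rw [hgk, norm_smul, Real.norm_eq_abs, abs_of_nonneg hε.le]
            exact mul_le_mul_of_nonneg_left (norm_add_le _ _) hε.le
        _ ≤ ε * 1 := by
            apply mul_le_mul_of_nonneg_left _ hε.le
            rw [norm_smul, norm_smul, Real.norm_eq_abs, Real.norm_eq_abs,
              abs_of_nonneg h1, abs_of_nonneg (by linarith), hu]
            nlinarith [mul_le_mul_of_nonneg_left hfk1 (by linarith : (0:ℝ) ≤ 1 - φ k)]
        _ = ε := mul_one ε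
    have hgf : BJOrth ℝ g f := by
      intro c
      refine hgle.trans ?_
      rcases le_or_gt 0 c with hc | hc
      · refine le_trans ?_ ((g + c • f).norm_coe_le_norm ks)
        have heq : (g + c • f) ks = (ε + c) • f ks := by
          simp only [ContinuousMap.add_apply, ContinuousMap.smul_apply, hgk, hφks]
          module
        rw [heq, norm_smul, Real.norm_eq_abs, abs_of_nonneg (by linarith), hks, mul_one]
        linarith
      · refine le_trans ?_ ((g + c • f).norm_coe_le_norm k₀)
        have heq : (g + c • f) k₀ = ε • u + c • f k₀ := by
          simp only [ContinuousMap.add_apply, ContinuousMap.smul_apply, hgk, hφk₀]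
          module
        rw [heq]
        by_cases h : f k₀ = 0
        · rw [h, smul_zero, add_zero, norm_smul, Real.norm_eq_abs,
            abs_of_nonneg hε.le, hu, mul_one]
        · have hu' : u = -(‖f k₀‖⁻¹) • f k₀ := by rw [hudef, if_neg h]
          have hfk : 0 < ‖f k₀‖ := norm_pos_iff.2 h
          have heq2 : ε • u + c • f k₀ = (c - ε * ‖f k₀‖⁻¹) • f k₀ := by
            rw [hu']; module
          rw [heq2, norm_smul, Real.norm_eq_abs]
          have hneg : c - ε * ‖f k₀‖⁻¹ < 0 := by
            have : 0 < ε * ‖f k₀‖⁻¹ := by positivity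
            linarith
          rw [abs_of_neg hneg]
          have hfs : (-(c - ε * ‖f k₀‖⁻¹)) * ‖f k₀‖ = ε - c * ‖f k₀‖ := by
            field_simp
            ring
          rw [hfs]
          nlinarith
    have hcontra := hsym g hgf (-(1/2))
    rw [hf] at hcontra
    have hb : ‖f + (-(1/2) : ℝ) • g‖ ≤ 1 - ε/2 := by
      rw [ContinuousMap.norm_le _ (by linarith)]
      intro k
      obtain ⟨h1, h2⟩ := hφmem k
      have hfk1 : ‖f k‖ ≤ 1 := hf ▸ f.norm_coe_le_norm k
      have heq : (f + (-(1/2) : ℝ) • g) k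
          = (1 - ε/2 * (1 - φ k)) • f k + (-(ε/2 * φ k)) • u := by
        simp only [ContinuousMap.add_apply, ContinuousMap.smul_apply, hgk]
        module
      rw [heq]
      have hA : (0:ℝ) ≤ 1 - ε/2 * (1 - φ k) := by nlinarith
      have step : ‖(1 - ε/2 * (1 - φ k)) • f k + (-(ε/2 * φ k)) • u‖
          ≤ (1 - ε/2 * (1 - φ k)) * ‖f k‖ + ε/2 * φ k := by
        refine (norm_add_le _ _).trans ?_
        rw [norm_smul, norm_smul, Real.norm_eq_abs, Real.norm_eq_abs,
          abs_of_nonneg hA, abs_neg, abs_of_nonneg (by nlinarith), hu, mul_one]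
      refine step.trans ?_
      by_cases hkU : k ∈ U
      · have hfb : ‖f k‖ ≤ 1 - 2*ε := le_of_lt hkU
        have hb1 : (1 - ε/2 * (1 - φ k)) * ‖f k‖ ≤ ‖f k‖ := by
          nlinarith [mul_nonneg (mul_nonneg (by linarith : (0:ℝ) ≤ ε/2)
            (by linarith : (0:ℝ) ≤ 1 - φ k)) (norm_nonneg (f k))]
        have hb2 : ε/2 * φ k ≤ ε/2 := by nlinarith
        linarith
      · have hφ0k : φ k = 0 := hφ0 hkU
        rw [hφ0k]
        nlinarith [mul_le_mul_of_nonneg_left hfk1 (by linarith : (0:ℝ) ≤ 1 - ε/2)]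
    linarith
  -- Part 2 : each f k is right symmetric
  intro k₀
  refine ⟨hnorm k₀, ?_⟩
  intro y hy
  by_contra hns
  simp only [BJOrth, not_forall, not_le] at hns
  obtain ⟨c₀, hr'⟩ := hns
  rw [hnorm k₀] at hr'
  set r : ℝ := ‖f k₀ + c₀ • y‖ with hrdef
  have hr : r < 1 := hr'
  have hr0 : 0 ≤ r := norm_nonneg _
  have hy0 : y ≠ 0 := by
    intro h
    have : r = 1 := by rw [hrdef, h, smul_zero, add_zero, hnorm k₀]
    linarith
  have hc0 : c₀ ≠ 0 := by
    intro h
    have : r = 1 := by rw [hrdef, h, zero_smul, add_zero, hnorm k₀]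
    linarith
  set η : ℝ := min (|c₀| * ‖y‖) (1/2) with hηdef
  have hη : 0 < η := lt_min (mul_pos (abs_pos.2 hc0) (norm_pos_iff.2 hy0)) (by norm_num)
  have hη2 : η ≤ 1/2 := min_le_right _ _
  have hηc : η / |c₀| ≤ ‖y‖ := by
    rw [div_le_iff₀ (abs_pos.2 hc0)]
    calc η ≤ |c₀| * ‖y‖ := min_le_left _ _
      _ = ‖y‖ * |c₀| := mul_comm _ _
  set δ : ℝ := (1 - r) / 2 with hδdef
  have hδ : 0 < δ := by rw [hδdef]; linarith
  set V : Set K := {k | ‖f k - f k₀‖ < δ} with hVdef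
  have hVopen : IsOpen V := isOpen_lt (f.continuous.sub continuous_const).norm continuous_const
  have hk₀V : k₀ ∈ V := by simp only [hVdef, mem_setOf_eq, sub_self, norm_zero]; exact hδ
  obtain ⟨φ, hφ0, hφ1, hφmem⟩ := exists_continuous_zero_one_of_isClosed
    hVopen.isClosed_compl isClosed_singleton
    (disjoint_singleton_right.mpr (fun hc => hc hk₀V))
  have hφk₀ : φ k₀ = 1 := hφ1 rfl
  set g : C(K, X) := ⟨fun k => φ k • y + (-(η/c₀) * (1 - φ k)) • f k, by fun_prop⟩ with hgdef
  have hgk : ∀ k, g k = φ k • y + (-(η/c₀) * (1 - φ k)) • f k := fun _ => rfl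
  have hgle : ‖g‖ ≤ ‖y‖ := by
    rw [ContinuousMap.norm_le _ (norm_nonneg y)]
    intro k
    obtain ⟨h1, h2⟩ := hφmem k
    calc ‖g k‖ ≤ φ k * ‖y‖ + (η/|c₀|) * (1 - φ k) := by
          rw [hgk]
          refine (norm_add_le _ _).trans ?_
          rw [norm_smul, norm_smul, Real.norm_eq_abs, Real.norm_eq_abs,
            abs_of_nonneg h1, abs_mul, abs_neg, abs_div, abs_of_nonneg hη.le,
            abs_of_nonneg (by linarith : (0:ℝ) ≤ 1 - φ k), hnorm k, mul_one]
      _ ≤ φ k * ‖y‖ + ‖y‖ * (1 - φ k) := by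
          have := mul_le_mul_of_nonneg_right hηc (by linarith : (0:ℝ) ≤ 1 - φ k)
          linarith
      _ = ‖y‖ := by ring
  have hgf : BJOrth ℝ g f := by
    intro c
    refine hgle.trans (le_trans ?_ ((g + c • f).norm_coe_le_norm k₀))
    have heq : (g + c • f) k₀ = y + c • f k₀ := by
      simp only [ContinuousMap.add_apply, ContinuousMap.smul_apply, hgk, hφk₀]
      module
    rw [heq]
    exact hy c
  have hcontra := hsym g hgf c₀
  rw [hf] at hcontra
  set B : ℝ := max ((1 + r)/2) (1 - η) with hBdef
  have hB : B < 1 := max_lt (by linarith) (by linarith)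
  have hB0 : 0 ≤ B := le_trans (by linarith) (le_max_left _ _)
  have hb : ‖f + c₀ • g‖ ≤ B := by
    rw [ContinuousMap.norm_le _ hB0]
    intro k
    obtain ⟨h1, h2⟩ := hφmem k
    have heq : (f + c₀ • g) k = φ k • (f k + c₀ • y) + ((1 - η) * (1 - φ k)) • f k := by
      simp only [ContinuousMap.add_apply, ContinuousMap.smul_apply, hgk]
      have hc : c₀ * (-(η/c₀) * (1 - φ k)) = -(η * (1 - φ k)) := by
        field_simp
      rw [smul_add, smul_smul, smul_smul, hc]
      module
    rw [heq]
    have key : ‖φ k • (f k + c₀ • y) + ((1 - η) * (1 - φ k)) • f k‖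
        ≤ φ k * ‖f k + c₀ • y‖ + (1 - η) * (1 - φ k) := by
      refine (norm_add_le _ _).trans ?_
      rw [norm_smul, norm_smul, Real.norm_eq_abs, Real.norm_eq_abs,
        abs_of_nonneg h1, abs_of_nonneg (by nlinarith), hnorm k, mul_one]
    refine key.trans ?_
    have h4 : 1 - η ≤ B := le_max_right _ _
    by_cases hkV : k ∈ V
    · have hd : ‖f k - f k₀‖ < δ := hkV
      have htri : ‖f k + c₀ • y‖ ≤ r + δ := by
        calc ‖f k + c₀ • y‖ = ‖(f k₀ + c₀ • y) + (f k - f k₀)‖ := by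
              congr 1; abel
          _ ≤ ‖f k₀ + c₀ • y‖ + ‖f k - f k₀‖ := norm_add_le _ _
          _ ≤ r + δ := by rw [← hrdef]; linarith
      have h3 : r + δ ≤ B := by
        refine le_trans ?_ (le_max_left _ _); rw [hδdef]; linarith
      nlinarith [mul_le_mul_of_nonneg_left (htri.trans h3) h1,
        mul_le_mul_of_nonneg_right h4 (by linarith : (0:ℝ) ≤ 1 - φ k)]
    · have hφ0k : φ k = 0 := hφ0 hkV
      rw [hφ0k]
      nlinarith [norm_nonneg (f k + c₀ • y)]
  linarith
end

section
/- Let X be a real Banach space. A norm-one element x ∈ X is right symmetric if and only if for every u ∈ X: x ∈ u⁻ implies u ∈ x⁻, and x ∈ u⁺ implies u ∈ x⁺. -/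
open scoped ENNReal

lemma exists_min_aux {X : Type*} [NormedAddCommGroup X] [NormedSpace ℝ X]
    (u x : X) (hx : ‖x‖ = 1) (h : ∀ t : ℝ, t ≤ 0 → ‖u‖ ≤ ‖u + t • x‖) :
    ∃ t₀ : ℝ, 0 ≤ t₀ ∧ ∀ t : ℝ, ‖u + t₀ • x‖ ≤ ‖u + t • x‖ := by
  have hcont : Continuous fun t : ℝ => ‖u + t • x‖ := by fun_prop
  obtain ⟨t₀, ht₀mem, hmin⟩ := (isCompact_Icc (a := (0:ℝ)) (b := 2*‖u‖+1)).exists_isMinOn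
    (Set.nonempty_Icc.2 (by positivity)) hcont.continuousOn
  have h0mem : (0:ℝ) ∈ Set.Icc (0:ℝ) (2*‖u‖+1) := ⟨le_refl _, by positivity⟩
  have h1 : ‖u + t₀ • x‖ ≤ ‖u‖ := by simpa using hmin h0mem
  refine ⟨t₀, ht₀mem.1, fun t => ?_⟩
  rcases le_or_gt t 0 with ht | ht
  · exact h1.trans (h t ht)
  rcases le_or_gt t (2*‖u‖+1) with ht2 | ht2
  · exact hmin ⟨ht.le, ht2⟩
  · have h2 : ‖t • x‖ ≤ ‖u + t • x‖ + ‖u‖ := by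
      calc ‖t • x‖ = ‖(u + t • x) - u‖ := by rw [add_sub_cancel_left]
        _ ≤ ‖u + t • x‖ + ‖u‖ := norm_sub_le _ _
    have h3 : ‖t • x‖ = t := by
      rw [norm_smul, hx, Real.norm_of_nonneg ht.le, mul_one]
    linarith


lemma exists_min_aux2 {X : Type*} [NormedAddCommGroup X] [NormedSpace ℝ X]
    (u x : X) (hx : ‖x‖ = 1) (h : ∀ t : ℝ, 0 ≤ t → ‖u‖ ≤ ‖u + t • x‖) :
    ∃ t₀ : ℝ, t₀ ≤ 0 ∧ ∀ t : ℝ, ‖u + t₀ • x‖ ≤ ‖u + t • x‖ := by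
  have hx' : ‖-x‖ = 1 := by rwa [norm_neg]
  have h' : ∀ t : ℝ, t ≤ 0 → ‖u‖ ≤ ‖u + t • (-x)‖ := by
    intro t ht
    have := h (-t) (by linarith)
    simpa [smul_neg, neg_smul] using this
  obtain ⟨t₀, ht₀, hmin⟩ := exists_min_aux u (-x) hx' h'
  refine ⟨-t₀, by linarith, fun t => ?_⟩
  have := hmin (-t)
  simpa [smul_neg, neg_smul] using this

lemma main_dir_aux {X : Type*} [NormedAddCommGroup X] [NormedSpace ℝ X]
    (x u : X) (hx : ‖x‖ = 1) (hsym : RightSymPt ℝ x)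
    (t₀ : ℝ) (hmin : ∀ t : ℝ, ‖u + t₀ • x‖ ≤ ‖u + t • x‖) :
    ∀ t : ℝ, t * t₀ ≤ 0 → ‖x‖ ≤ ‖x + t • u‖ := by
  intro t htt
  set v := u + t₀ • x with hv
  have hbv : BJOrth ℝ v x := by
    intro c
    have := hmin (t₀ + c)
    simpa [hv, add_smul, add_assoc] using this
  have hb := hsym v hbv
  set s : ℝ := 1 - t * t₀ with hs
  have hs1 : (1:ℝ) ≤ s := by simp [hs]; linarith
  have hs0 : s ≠ 0 := by linarith
  have hrw : x + t • u = s • (x + (s⁻¹ * t) • v) := by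
    rw [hv]
    match_scalars
    · field_simp [hs]; linarith
    · field_simp
  calc ‖x‖ = 1 := hx
    _ ≤ s * ‖x + (s⁻¹ * t) • v‖ := by
        have h1 : (1:ℝ) ≤ ‖x + (s⁻¹ * t) • v‖ := hx ▸ hb (s⁻¹ * t)
        nlinarith
    _ = ‖x + t • u‖ := by
        rw [hrw, norm_smul, Real.norm_of_nonneg (by linarith)]

/-- Characterization of right symmetric points of a real Banach space. -/
theorem stmt10 {X : Type*} [NormedAddCommGroup X] [NormedSpace ℝ X] [CompleteSpace X]
    (x : X) (hx : ‖x‖ = 1) :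
    RightSymPt ℝ x ↔
      ∀ u : X, (InMinus u x → InMinus x u) ∧ (InPlus u x → InPlus x u) := by
  constructor
  · intro hsym u
    constructor
    · intro h
      obtain ⟨t₀, ht₀, hmin⟩ := exists_min_aux u x hx h
      intro t ht
      exact main_dir_aux x u hx hsym t₀ hmin t (mul_nonpos_iff.2 (Or.inr ⟨ht, ht₀⟩))
    · intro h
      obtain ⟨t₀, ht₀, hmin⟩ := exists_min_aux2 u x hx h
      intro t ht
      exact main_dir_aux x u hx hsym t₀ hmin t (mul_nonpos_iff.2 (Or.inl ⟨ht, ht₀⟩))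
  · intro h y hyx c
    obtain ⟨hm, hp⟩ := h y
    rcases le_or_gt c 0 with hc | hc
    · exact hm (fun t _ => hyx t) c hc
    · exact hp (fun t _ => hyx t) c hc.le
end

section
/- Let K be a locally compact normal Hausdorff space that is not compact and X a Banach space. Then the only right symmetric point of C_0(K, X) is the zero function. -/
open scoped ENNReal

set_option maxHeartbeats 1000000

section aux
variable {K X : Type*} [TopologicalSpace K] [NormedAddCommGroup X]

lemma my_norm_apply_le (f : ZeroAtInftyContinuousMap K X) (k : K) : ‖f k‖ ≤ ‖f‖ :=
  by rw [← ZeroAtInftyContinuousMap.norm_toBCF_eq_norm]; exact f.toBCF.norm_coe_le_norm k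

lemma my_norm_le (f : ZeroAtInftyContinuousMap K X) {C : ℝ} (hC : 0 ≤ C)
    (H : ∀ k, ‖f k‖ ≤ C) : ‖f‖ ≤ C := by
  rw [← ZeroAtInftyContinuousMap.norm_toBCF_eq_norm]
  exact (BoundedContinuousFunction.norm_le hC).2 H

lemma my_exists_norm_eq (f : ZeroAtInftyContinuousMap K X) (hf : f ≠ 0) :
    ∃ k, ‖f k‖ = ‖f‖ := by
  set M := ‖f‖ with hM
  have hM0 : 0 < M := norm_pos_iff.mpr hf
  have h2 : ∀ᶠ k in Filter.cocompact K, ‖f k‖ < M / 2 := by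
    have := Metric.tendsto_nhds.mp f.zero_at_infty' (M / 2) (by positivity)
    simpa [dist_eq_norm] using this
  obtain ⟨t, htc, hts⟩ := Filter.mem_cocompact.mp h2
  rcases t.eq_empty_or_nonempty with rfl | hne
  · exfalso
    have : ‖f‖ ≤ M / 2 := my_norm_le f (by positivity) fun k => (hts (by simp) :).le
    linarith
  · obtain ⟨k0, hk0t, hk0⟩ := htc.exists_isMaxOn hne
      ((map_continuous f).norm.continuousOn)
    refine ⟨k0, le_antisymm (my_norm_apply_le f k0) ?_⟩
    have hle : ‖f‖ ≤ max ‖f k0‖ (M / 2) := by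
      refine my_norm_le f (le_max_of_le_left (norm_nonneg _)) fun k => ?_
      by_cases hk : k ∈ t
      · exact le_max_of_le_left (hk0 hk)
      · exact le_max_of_le_right (hts hk).le
    rcases max_cases ‖f k0‖ (M / 2) with ⟨h, _⟩ | ⟨h, _⟩
    · rwa [h] at hle
    · exfalso; rw [h] at hle; linarith
end aux

/-- If K is locally compact, normal, Hausdorff and not compact, then the only right symmetric
point of C₀(K, X) is zero. -/
theorem stmt12 (𝕜 K X : Type*) [RCLike 𝕜] [TopologicalSpace K] [T2Space K]
    [LocallyCompactSpace K] [NormalSpace K] (hK : ¬ CompactSpace K)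
    [NormedAddCommGroup X] [NormedSpace 𝕜 X] [CompleteSpace X]
    (f : ZeroAtInftyContinuousMap K X) :
    RightSymPt 𝕜 f ↔ f = 0 := by
  constructor
  · intro hsym
    by_contra hf
    set M := ‖f‖ with hMdef
    have hM0 : 0 < M := norm_pos_iff.mpr hf
    obtain ⟨k0, hk0⟩ := my_exists_norm_eq f hf
    -- a point where f is small
    have h2 : ∀ᶠ k in Filter.cocompact K, ‖f k‖ < M / 2 := by
      have := Metric.tendsto_nhds.mp f.zero_at_infty' (M / 2) (by positivity)
      simpa [dist_eq_norm] using this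
    obtain ⟨t, htc, hts⟩ := Filter.mem_cocompact.mp h2
    have htne : t ≠ Set.univ := by
      intro h; exact hK (by rw [← isCompact_univ_iff, ← h]; exact htc)
    obtain ⟨k1, hk1t⟩ : ∃ k1, k1 ∉ t := by
      by_contra h; push_neg at h; exact htne (Set.eq_univ_of_forall h)
    have hk1 : ‖f k1‖ < M / 2 := hts hk1t
    -- open set V where f is small
    set V : Set K := {k | ‖f k‖ < M / 2} with hVdef
    have hVopen : IsOpen V := isOpen_lt (map_continuous f).norm continuous_const
    have hk1V : k1 ∈ V := hk1
    obtain ⟨Kc, hKcc, hk1i, hKcV⟩ := exists_compact_subset hVopen hk1V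
    set U : Set K := interior Kc with hUdef
    have hUopen : IsOpen U := isOpen_interior
    have hclU : IsCompact (closure U) :=
      hKcc.of_isClosed_subset isClosed_closure
        (closure_minimal interior_subset hKcc.isClosed)
    obtain ⟨φ, hφsupp, hφ1, hφ01⟩ :=
      exists_tsupport_one_of_isOpen_isClosed hUopen hclU isClosed_singleton
        (Set.singleton_subset_iff.mpr hk1i)
    have hφk1 : φ k1 = 1 := hφ1 rfl
    have hsuppV : tsupport φ ⊆ V := hφsupp.trans (interior_subset.trans hKcV)
    have hsuppc : IsCompact (tsupport φ) :=
      hKcc.of_isClosed_subset (isClosed_tsupport φ) (hφsupp.trans interior_subset)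
    -- the unit vector u
    have hfk0 : f k0 ≠ 0 := by
      intro h; rw [h, norm_zero] at hk0; exact hM0.ne hk0
    obtain ⟨u, hu, hucase⟩ : ∃ u : X, ‖u‖ = 1 ∧
        (f k1 ≠ 0 → u = -(((‖f k1‖⁻¹ : ℝ) : 𝕜) • f k1)) := by
      by_cases h : f k1 = 0
      · refine ⟨((‖f k0‖⁻¹ : ℝ) : 𝕜) • f k0, ?_, fun hn => absurd h hn⟩
        rw [norm_smul, RCLike.norm_ofReal, abs_inv, abs_norm]
        exact inv_mul_cancel₀ (norm_ne_zero_iff.mpr hfk0)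
      · refine ⟨-(((‖f k1‖⁻¹ : ℝ) : 𝕜) • f k1), ?_, fun _ => rfl⟩
        rw [norm_neg, norm_smul, RCLike.norm_ofReal, abs_inv, abs_norm]
        exact inv_mul_cancel₀ (norm_ne_zero_iff.mpr h)
    set w : X := ((M : ℝ) : 𝕜) • u with hwdef
    have hw : ‖w‖ = M := by
      rw [hwdef, norm_smul, RCLike.norm_ofReal, hu, abs_of_pos hM0, mul_one]
    -- the function g
    set g0 : K → X := fun k => ((1 - φ k : ℝ) : 𝕜) • f k + ((φ k : ℝ) : 𝕜) • w
      with hg0def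
    have hg0cont : Continuous g0 := by
      apply Continuous.add
      · exact (RCLike.continuous_ofReal.comp (continuous_const.sub φ.continuous)).smul
          (map_continuous f)
      · exact (RCLike.continuous_ofReal.comp φ.continuous).smul continuous_const
    have hg0eq : ∀ k ∉ tsupport φ, g0 k = f k := by
      intro k hk
      have : φ k = 0 := image_eq_zero_of_notMem_tsupport hk
      simp [hg0def, this]
    set g : ZeroAtInftyContinuousMap K X :=
      { toFun := g0
        continuous_toFun := hg0cont
        zero_at_infty' := by
          refine f.zero_at_infty'.congr' ?_
          filter_upwards [hsuppc.compl_mem_cocompact] with k hk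
          exact (hg0eq k hk).symm } with hgdef
    have hgapp : ∀ k, g k = ((1 - φ k : ℝ) : 𝕜) • f k + ((φ k : ℝ) : 𝕜) • w :=
      fun k => rfl
    have hgk1 : g k1 = w := by
      rw [hgapp, hφk1]; simp
    have hgle : ∀ k, ‖g k‖ ≤ M := by
      intro k
      obtain ⟨h0, h1⟩ := hφ01 k
      calc ‖g k‖ ≤ ‖((1 - φ k : ℝ) : 𝕜) • f k‖ + ‖((φ k : ℝ) : 𝕜) • w‖ := by
            rw [hgapp]; exact norm_add_le _ _
        _ = |1 - φ k| * ‖f k‖ + |φ k| * M := by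
            rw [norm_smul, norm_smul, RCLike.norm_ofReal, RCLike.norm_ofReal, hw]
        _ ≤ (1 - φ k) * M + φ k * M := by
            rw [abs_of_nonneg (by linarith), abs_of_nonneg h0]
            have := my_norm_apply_le f k
            nlinarith [my_norm_apply_le f k, norm_nonneg (f k)]
        _ = M := by ring
    have hgnorm : ‖g‖ = M := by
      refine le_antisymm (my_norm_le g hM0.le hgle) ?_
      calc M = ‖g k1‖ := by rw [hgk1, hw]
        _ ≤ ‖g‖ := my_norm_apply_le g k1
    -- g ⊥_B f
    have hBJ : BJOrth 𝕜 g f := by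
      intro c
      rw [hgnorm]
      rcases le_or_gt 0 (RCLike.re c) with hc | hc
      · -- use k0
        have hk0V : k0 ∉ V := by
          simp only [hVdef, Set.mem_setOf_eq, hk0, not_lt]; linarith
        have hk0supp : k0 ∉ tsupport φ := fun h => hk0V (hsuppV h)
        have hg0k0 : g k0 = f k0 := hg0eq k0 hk0supp
        have hre : (1 : ℝ) ≤ ‖(1 : 𝕜) + c‖ := by
          have h1 := RCLike.re_le_norm ((1 : 𝕜) + c)
          rw [map_add, RCLike.one_re] at h1
          linarith
        calc M ≤ ‖f k0 + c • f k0‖ := by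
              have : f k0 + c • f k0 = ((1 : 𝕜) + c) • f k0 := by
                rw [add_smul, one_smul]
              rw [this, norm_smul, hk0, ← hMdef]
              nlinarith
            _ = ‖(g + c • f) k0‖ := by
              rw [ZeroAtInftyContinuousMap.add_apply, ZeroAtInftyContinuousMap.smul_apply,
                hg0k0]
            _ ≤ ‖g + c • f‖ := my_norm_apply_le _ k0
      · -- use k1
        have key : M ≤ ‖(g + c • f) k1‖ := by
          rw [ZeroAtInftyContinuousMap.add_apply, ZeroAtInftyContinuousMap.smul_apply, hgk1]
          by_cases h : f k1 = 0
          · rw [h, smul_zero, add_zero, hw]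
          · have ha : 0 < ‖f k1‖ := norm_pos_iff.mpr h
            set a : ℝ := ‖f k1‖ with hadef
            set r : ℝ := M / a with hrdef
            have hr : 0 < r := div_pos hM0 ha
            have hwc : w + c • f k1 = (c - (r : 𝕜)) • f k1 := by
              rw [hwdef, hucase h, smul_neg, smul_smul, ← RCLike.ofReal_mul, sub_smul]
              rw [show M * a⁻¹ = r by rw [hrdef, div_eq_mul_inv]]
              abel
            rw [hwc, norm_smul, ← hadef]
            have h3 : r - RCLike.re c ≤ ‖c - (r : 𝕜)‖ := by
              have h4 := RCLike.abs_re_le_norm (c - (r : 𝕜))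
              rw [map_sub, RCLike.ofReal_re] at h4
              have h5 : -(RCLike.re c - r) ≤ |RCLike.re c - r| := neg_le_abs _
              linarith
            have hra : r * a = M := div_mul_cancel₀ M ha.ne'
            nlinarith
        exact key.trans (my_norm_apply_le _ k1)
    have hBJ2 := hsym g hBJ
    set c : 𝕜 := ((-(1/4) : ℝ) : 𝕜) with hcdef
    have hcnorm : ‖c‖ = 1/4 := by
      rw [hcdef, RCLike.norm_ofReal]; norm_num
    have hpt : ∀ k, ‖(f + c • g) k‖ ≤ 3/4 * M := by
      intro k
      obtain ⟨h0, h1⟩ := hφ01 k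
      rw [ZeroAtInftyContinuousMap.add_apply, ZeroAtInftyContinuousMap.smul_apply, hgapp]
      have expand : f k + c • (((1 - φ k : ℝ) : 𝕜) • f k + ((φ k : ℝ) : 𝕜) • w)
          = ((1 - (1 - φ k)/4 : ℝ) : 𝕜) • f k + (c * ((φ k : ℝ) : 𝕜)) • w := by
        have hcoef : ((1 - (1 - φ k)/4 : ℝ) : 𝕜) = (1 : 𝕜) + c * ((1 - φ k : ℝ) : 𝕜) := by
          rw [hcdef]; push_cast; ring
        rw [hcoef, smul_add, smul_smul, smul_smul, ← add_assoc, add_smul, one_smul]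
      rw [expand]
      have hb1 : ‖((1 - (1 - φ k)/4 : ℝ) : 𝕜) • f k‖ ≤ ‖f k‖ := by
        rw [norm_smul, RCLike.norm_ofReal]
        have : |1 - (1 - φ k)/4| ≤ 1 := by rw [abs_le]; constructor <;> linarith
        nlinarith [norm_nonneg (f k)]
      have hb2 : ‖(c * ((φ k : ℝ) : 𝕜)) • w‖ = 1/4 * φ k * M := by
        rw [norm_smul, norm_mul, hcnorm, RCLike.norm_ofReal, abs_of_nonneg h0, hw]
      by_cases hk : k ∈ tsupport φ
      · have hfk : ‖f k‖ < M / 2 := hsuppV hk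
        calc ‖_ + _‖ ≤ ‖((1 - (1 - φ k)/4 : ℝ) : 𝕜) • f k‖ + ‖(c * ((φ k : ℝ) : 𝕜)) • w‖ :=
              norm_add_le _ _
          _ ≤ ‖f k‖ + 1/4 * φ k * M := by rw [hb2]; linarith
          _ ≤ 3/4 * M := by nlinarith
      · have hφ0 : φ k = 0 := image_eq_zero_of_notMem_tsupport hk
        rw [hφ0]
        simp only [RCLike.ofReal_zero, mul_zero, zero_smul, add_zero]
        rw [norm_smul, RCLike.norm_ofReal]
        have h6 : |1 - (1 - (0:ℝ))/4| = 3/4 := by norm_num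
        rw [h6]
        have := my_norm_apply_le f k
        nlinarith
    have hle : ‖f + c • g‖ ≤ 3/4 * M := my_norm_le _ (by nlinarith) hpt
    have hge := hBJ2 c
    rw [← hMdef] at hge
    linarith
  · rintro rfl
    intro y _ c
    simpa using norm_nonneg _
end

section
/- Let X be a Banach space and n ≥ 1. An element (x₁, …, xₙ) in the ℓ∞-direct sum X^n (with norm max_i ||x_i||) is both left symmetric and right symmetric if and only if it is zero, provided n > 1. -/
open scoped ENNReal

/-- For n > 1, the only symmetric point of the ℓ∞-sum Xⁿ is zero. -/
theorem stmt13 (𝕜 X : Type*) [RCLike 𝕜] [NormedAddCommGroup X] [NormedSpace 𝕜 X]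
    [CompleteSpace X] (n : ℕ) (hn : 1 < n) (x : PiLp ∞ (fun _ : Fin n => X)) :
    (LeftSymPt 𝕜 x ∧ RightSymPt 𝕜 x) ↔ x = 0 := by
  have hnp : 0 < n := by omega
  haveI : Nonempty (Fin n) := ⟨⟨0, hnp⟩⟩
  have happle : ∀ (f : PiLp ∞ (fun _ : Fin n => X)) (i : Fin n), ‖f i‖ ≤ ‖f‖ := by
    intro f i
    rw [PiLp.norm_eq_ciSup]
    exact le_ciSup (Finite.bddAbove_range fun i => ‖f i‖) i
  have hle : ∀ (f : PiLp ∞ (fun _ : Fin n => X)) (M : ℝ), (∀ i, ‖f i‖ ≤ M) → ‖f‖ ≤ M := by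
    intro f M h
    rw [PiLp.norm_eq_ciSup]
    exact ciSup_le h
  constructor
  · rintro ⟨hL, hR⟩
    by_contra hx
    obtain ⟨j, hj⟩ := Finite.exists_max (fun i : Fin n => ‖x i‖)
    simp only at hj
    have hMx : ‖x‖ = ‖x j‖ := le_antisymm (hle x _ hj) (happle x j)
    have hMpos : 0 < ‖x j‖ := hMx ▸ norm_pos_iff.mpr hx
    -- Step 1: left symmetry forces all other coordinates to vanish
    have hzero : ∀ i, i ≠ j → x i = 0 := by
      intro i hij
      by_contra hxi
      have hrpos : 0 < ‖x i‖ := norm_pos_iff.mpr hxi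
      set y : PiLp ∞ (fun _ : Fin n => X) := WithLp.toLp ∞ (fun l => if l = i then x i else 0) with hy
      have hyapp : ∀ l, y l = if l = i then x i else 0 := fun l => rfl
      have hxy : BJOrth 𝕜 x y := by
        intro c
        calc ‖x‖ = ‖x j‖ := hMx
          _ = ‖(x + c • y) j‖ := by
              rw [PiLp.add_apply, PiLp.smul_apply, hyapp, if_neg (Ne.symm hij),
                smul_zero, add_zero]
          _ ≤ ‖x + c • y‖ := happle _ j
      have hyx := hL y hxy (-((‖x i‖ / (2 * ‖x j‖) : ℝ) : 𝕜))
      set t : ℝ := ‖x i‖ / (2 * ‖x j‖) with ht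
      have ht0 : 0 < t := by positivity
      have htj : t * ‖x j‖ = ‖x i‖ / 2 := by
        rw [ht, div_mul_eq_mul_div, mul_div_mul_right _ _ hMpos.ne']
      have hub : ‖y + (-(t : 𝕜)) • x‖ ≤ max (‖x i‖ - t * ‖x i‖) (‖x i‖ / 2) := by
        refine hle _ _ ?_
        intro l
        rw [PiLp.add_apply, PiLp.smul_apply, hyapp]
        by_cases hl : l = i
        · subst hl
          rw [if_pos rfl]
          have h1 : x l + (-(t : 𝕜)) • x l = (((1 - t : ℝ) : 𝕜)) • x l := by
            push_cast
            module
          rw [h1, norm_smul, RCLike.norm_ofReal]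
          have ht1 : t ≤ 1 := by
            rw [ht, div_le_one (by positivity)]
            nlinarith [hj l]
          rw [abs_of_nonneg (by linarith)]
          have h2 : (1 - t) * ‖x l‖ = ‖x l‖ - t * ‖x l‖ := by ring
          rw [h2]
          exact le_max_left _ _
        · rw [if_neg hl, zero_add, norm_smul, norm_neg, RCLike.norm_ofReal,
            abs_of_nonneg ht0.le]
          refine le_max_of_le_right ?_
          rw [← htj]
          exact mul_le_mul_of_nonneg_left (hj l) ht0.le
      have hylow : ‖x i‖ ≤ ‖y‖ := by
        have := happle y i
        rwa [hyapp, if_pos rfl] at this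
      have hlt : max (‖x i‖ - t * ‖x i‖) (‖x i‖ / 2) < ‖x i‖ := by
        apply max_lt <;> nlinarith
      linarith [le_trans hylow (le_trans hyx hub)]
    -- Step 2: right symmetry kills the remaining coordinate
    obtain ⟨k, hk⟩ := Fintype.exists_ne_of_one_lt_card (by simpa using hn) j
    set y : PiLp ∞ (fun _ : Fin n => X) := WithLp.toLp ∞ (fun l => if l = k then x j else x l) with hy
    have hyapp : ∀ l, y l = if l = k then x j else x l := fun l => rfl
    have hyx : BJOrth 𝕜 y x := by
      intro c
      have hynorm : ‖y‖ ≤ ‖x j‖ := by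
        refine hle _ _ ?_
        intro l
        rw [hyapp]
        by_cases hl : l = k
        · rw [if_pos hl]
        · rw [if_neg hl]; exact hj l
      calc ‖y‖ ≤ ‖x j‖ := hynorm
        _ = ‖(y + c • x) k‖ := by
            rw [PiLp.add_apply, PiLp.smul_apply, hyapp, if_pos rfl, hzero k hk,
              smul_zero, add_zero]
        _ ≤ ‖y + c • x‖ := happle _ k
    have hxy := hR y hyx (-(((1 : ℝ) / 2 : ℝ) : 𝕜))
    have hub : ‖x + (-(((1 : ℝ) / 2 : ℝ) : 𝕜)) • y‖ ≤ ‖x j‖ / 2 := by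
      refine hle _ _ ?_
      intro l
      rw [PiLp.add_apply, PiLp.smul_apply, hyapp]
      by_cases hl : l = k
      · subst hl
        rw [if_pos rfl, hzero l hk, zero_add, norm_smul, norm_neg, RCLike.norm_ofReal]
        rw [abs_of_nonneg (by norm_num)]
        linarith
      · rw [if_neg hl]
        by_cases hlj : l = j
        · subst hlj
          have h1 : x l + (-(((1 : ℝ) / 2 : ℝ) : 𝕜)) • x l
              = (((1 - 1 / 2 : ℝ) : 𝕜)) • x l := by
            push_cast
            module
          rw [h1, norm_smul, RCLike.norm_ofReal]
          rw [abs_of_nonneg (by norm_num)]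
          rw [show ((1:ℝ) - 1/2) = 1/2 by norm_num]
          linarith
        · rw [hzero l hlj, smul_zero, add_zero, norm_zero]
          positivity
    rw [hMx] at hxy
    linarith [le_trans hxy hub]
  · rintro rfl
    constructor
    · intro y _ c
      simp
    · intro y _ c
      simp [norm_nonneg]
end

section
/- Let X, Y be reflexive Banach spaces and T : X → Y a rank-one bounded linear operator of norm one that is a left symmetric point of L(X, Y). Then there exist a left symmetric point w of Y and a left symmetric point f of X* such that Tx = f(x)·w for all x ∈ X. -/
open scoped ENNReal

/-- A rank-one norm-one left symmetric operator between reflexive Banach spaces is of the form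
x ↦ f(x) w with w, f left symmetric. -/
theorem stmt17 (𝕜 X Y : Type*) [RCLike 𝕜]
    [NormedAddCommGroup X] [NormedSpace 𝕜 X] [CompleteSpace X]
    [NormedAddCommGroup Y] [NormedSpace 𝕜 Y] [CompleteSpace Y]
    (hX : Function.Surjective (NormedSpace.inclusionInDoubleDual 𝕜 X))
    (hY : Function.Surjective (NormedSpace.inclusionInDoubleDual 𝕜 Y))
    (T : X →L[𝕜] Y) (hrank : Module.finrank 𝕜 (LinearMap.range T.toLinearMap) = 1)
    (hT : ‖T‖ = 1) (hsym : LeftSymPt 𝕜 T) :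
    ∃ (w : Y) (f : X →L[𝕜] 𝕜), LeftSymPt 𝕜 w ∧ LeftSymPt 𝕜 f ∧ ∀ x : X, T x = f x • w := by
  -- extract a spanning vector of the range
  obtain ⟨v, hv0, hvspan⟩ := (finrank_eq_one_iff' (K := 𝕜)
    (V := LinearMap.range T.toLinearMap)).mp hrank
  have hv0' : (v : Y) ≠ 0 := fun h => hv0 (Subtype.ext h)
  -- dual vector
  obtain ⟨ψ, hψnorm, hψv⟩ := exists_dual_vector 𝕜 (v : Y) (norm_ne_zero_iff.mpr hv0')
  set φ : Y →L[𝕜] 𝕜 := ((‖(v : Y)‖ : 𝕜))⁻¹ • ψ with hφ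
  set f : X →L[𝕜] 𝕜 := φ.comp T with hf
  set w : Y := (v : Y) with hw
  -- the key representation
  have hrep : ∀ x : X, T x = f x • w := by
    intro x
    obtain ⟨c, hc⟩ := hvspan ⟨T x, LinearMap.mem_range_self _ x⟩
    have hc' : c • w = T x := congrArg Subtype.val hc
    have : f x = c := by
      have hvne : ((‖(v : Y)‖ : 𝕜)) ≠ 0 :=
        RCLike.ofReal_ne_zero.mpr (norm_ne_zero_iff.mpr hv0')
      have : φ (T x) = c := by
        rw [← hc']
        simp only [hφ, hw, ContinuousLinearMap.smul_apply, map_smul, hψv, smul_eq_mul]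
        rw [show ψ (v : Y) = ((‖(v : Y)‖ : ℝ) : 𝕜) from hψv, inv_mul_cancel₀ hvne, mul_one]
      simpa [hf] using this
    rw [this, hc']
  have hTeq : T = f.smulRight w := by ext x; simpa using hrep x
  have hnormT : ‖f‖ * ‖w‖ = 1 := by
    rw [← ContinuousLinearMap.norm_smulRight_apply, ← hTeq, hT]
  have hfpos : 0 < ‖f‖ := by
    rcases (norm_nonneg f).lt_or_eq with h | h
    · exact h
    · exfalso; rw [← h, zero_mul] at hnormT; exact one_ne_zero hnormT.symm
  have hwpos : 0 < ‖w‖ := norm_pos_iff.mpr hv0'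
  refine ⟨w, f, ?_, ?_, hrep⟩
  · -- w is left symmetric
    intro y hwy c
    have hTS : BJOrth 𝕜 T (f.smulRight y) := by
      intro d
      have h1 : T + d • f.smulRight y = f.smulRight (w + d • y) := by
        ext x
        simp [hTeq, smul_add, smul_comm d (f x)]
      rw [h1, ContinuousLinearMap.norm_smulRight_apply, hT]
      calc (1 : ℝ) = ‖f‖ * ‖w‖ := hnormT.symm
        _ ≤ ‖f‖ * ‖w + d • y‖ := by
            exact mul_le_mul_of_nonneg_left (hwy d) (norm_nonneg f)
    have := hsym (f.smulRight y) hTS c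
    have h2 : f.smulRight y + c • T = f.smulRight (y + c • w) := by
      ext x
      simp [hTeq, smul_add, smul_comm c (f x)]
    rw [h2, ContinuousLinearMap.norm_smulRight_apply, ContinuousLinearMap.norm_smulRight_apply]
      at this
    exact le_of_mul_le_mul_left this hfpos
  · -- f is left symmetric
    intro g hfg c
    have hTS : BJOrth 𝕜 T (g.smulRight w) := by
      intro d
      have h1 : T + d • g.smulRight w = (f + d • g).smulRight w := by
        ext x
        simp [hTeq, add_smul, smul_smul]
      rw [h1, ContinuousLinearMap.norm_smulRight_apply, hT]
      calc (1 : ℝ) = ‖f‖ * ‖w‖ := hnormT.symm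
        _ ≤ ‖f + d • g‖ * ‖w‖ := by
            exact mul_le_mul_of_nonneg_right (hfg d) (norm_nonneg w)
    have := hsym (g.smulRight w) hTS c
    have h2 : g.smulRight w + c • T = (g + c • f).smulRight w := by
      ext x
      simp [hTeq, add_smul, smul_smul]
    rw [h2, ContinuousLinearMap.norm_smulRight_apply, ContinuousLinearMap.norm_smulRight_apply]
      at this
    exact le_of_mul_le_mul_right this hwpos
end

section
/- Let X, Y be reflexive Banach spaces and T : X → Y a rank-one bounded linear operator of norm one that is a right symmetric point of L(X, Y). Then there exist a right symmetric point w of Y and a right symmetric point f of X* such that Tx = f(x)·w for all x ∈ X. -/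
open scoped ENNReal

/-- A rank-one norm-one right symmetric operator between reflexive Banach spaces is of the form
x ↦ f(x) w with w, f right symmetric. -/
theorem stmt18 (𝕜 X Y : Type*) [RCLike 𝕜]
    [NormedAddCommGroup X] [NormedSpace 𝕜 X] [CompleteSpace X]
    [NormedAddCommGroup Y] [NormedSpace 𝕜 Y] [CompleteSpace Y]
    (hX : Function.Surjective (NormedSpace.inclusionInDoubleDual 𝕜 X))
    (hY : Function.Surjective (NormedSpace.inclusionInDoubleDual 𝕜 Y))
    (T : X →L[𝕜] Y) (hrank : Module.finrank 𝕜 (LinearMap.range T.toLinearMap) = 1)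
    (hT : ‖T‖ = 1) (hsym : RightSymPt 𝕜 T) :
    ∃ (w : Y) (f : X →L[𝕜] 𝕜), RightSymPt 𝕜 w ∧ RightSymPt 𝕜 f ∧ ∀ x : X, T x = f x • w := by
  classical
  -- T ≠ 0
  have hT0 : ∃ x, T x ≠ 0 := by
    by_contra h
    push_neg at h
    have : LinearMap.range T.toLinearMap = ⊥ := by
      rw [LinearMap.range_eq_bot]
      ext x; simp [h x]
    rw [this] at hrank
    simp at hrank
  obtain ⟨x0, hx0⟩ := hT0
  set w : Y := ((‖T x0‖ : 𝕜))⁻¹ • T x0 with hwdef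
  have hnx0 : (0:ℝ) < ‖T x0‖ := norm_pos_iff.mpr hx0
  have hw1 : ‖w‖ = 1 := by
    rw [hwdef, norm_smul, norm_inv, RCLike.norm_ofReal, abs_of_pos hnx0]
    field_simp
  have hwne : w ≠ 0 := by
    intro h; rw [h, norm_zero] at hw1; norm_num at hw1
  have hwmem : w ∈ LinearMap.range T.toLinearMap :=
    Submodule.smul_mem _ _ ⟨x0, rfl⟩
  -- range = span {w}
  have hfd : FiniteDimensional 𝕜 (LinearMap.range T.toLinearMap) :=
    FiniteDimensional.of_finrank_eq_succ hrank
  have hspan : LinearMap.range T.toLinearMap = Submodule.span 𝕜 {w} := by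
    have hle : Submodule.span 𝕜 {w} ≤ LinearMap.range T.toLinearMap := by
      rw [Submodule.span_le]; simpa using hwmem
    refine (Submodule.eq_of_le_of_finrank_le hle ?_).symm
    rw [hrank, finrank_span_singleton hwne]
  -- dual functional
  obtain ⟨ψ, hψ1, hψw⟩ := exists_dual_vector 𝕜 w (norm_ne_zero_iff.mpr hwne)
  have hψw1 : ψ w = 1 := by rw [hψw, hw1]; norm_num
  set f : X →L[𝕜] 𝕜 := ψ.comp T with hfdef
  have hrep : ∀ x : X, T x = f x • w := by
    intro x
    have hx : T x ∈ Submodule.span 𝕜 {w} := hspan ▸ ⟨x, rfl⟩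
    obtain ⟨c, hc⟩ := Submodule.mem_span_singleton.mp hx
    have : f x = c := by
      simp [hfdef, ← hc, map_smul, hψw1]
    rw [this, hc]
  have hTeq : T = f.smulRight w := by
    ext x; simp [hrep x]
  have hfne : ‖f‖ ≠ 0 := by
    intro h
    have : f = 0 := by simpa [norm_eq_zero] using h
    apply hx0
    rw [hrep x0, this]; simp
  have hfpos : (0:ℝ) < ‖f‖ := lt_of_le_of_ne (norm_nonneg _) (Ne.symm hfne)
  refine ⟨w, f, ?_, ?_, hrep⟩
  · -- w right symmetric
    intro y hy
    have hS : BJOrth 𝕜 (f.smulRight y) T := by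
      intro c
      have heq : f.smulRight y + c • T = f.smulRight (y + c • w) := by
        ext x
        simp only [ContinuousLinearMap.add_apply, ContinuousLinearMap.smulRight_apply,
          ContinuousLinearMap.smul_apply, smul_add, hrep x]
        rw [smul_comm c (f x) w]
      rw [heq, ContinuousLinearMap.norm_smulRight_apply,
        ContinuousLinearMap.norm_smulRight_apply]
      exact mul_le_mul_of_nonneg_left (hy c) (norm_nonneg _)
    have hTS := hsym _ hS
    intro c
    have h1 := hTS c
    have heq : T + c • f.smulRight y = f.smulRight (w + c • y) := by
      ext x
      simp only [ContinuousLinearMap.add_apply, ContinuousLinearMap.smulRight_apply,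
        ContinuousLinearMap.smul_apply, smul_add, hrep x]
      rw [smul_comm c (f x) y]
    rw [heq] at h1
    rw [hTeq, ContinuousLinearMap.norm_smulRight_apply,
      ContinuousLinearMap.norm_smulRight_apply] at h1
    exact le_of_mul_le_mul_left h1 hfpos
  · -- f right symmetric
    intro g hg
    have hS : BJOrth 𝕜 (g.smulRight w) T := by
      intro c
      have heq : g.smulRight w + c • T = (g + c • f).smulRight w := by
        ext x
        simp [hrep x, add_smul, smul_smul]
      rw [heq, ContinuousLinearMap.norm_smulRight_apply,
        ContinuousLinearMap.norm_smulRight_apply]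
      exact mul_le_mul_of_nonneg_right (hg c) (norm_nonneg _)
    have hTS := hsym _ hS
    intro c
    have h1 := hTS c
    have heq : T + c • g.smulRight w = (f + c • g).smulRight w := by
      ext x
      simp [hrep x, add_smul, smul_smul]
    rw [heq] at h1
    rw [hTeq, ContinuousLinearMap.norm_smulRight_apply,
      ContinuousLinearMap.norm_smulRight_apply, hw1, mul_one, mul_one] at h1
    exact h1
end
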